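/- arXiv:1911.08369 — 3 statements merged into one kernel-verified Lean document; each statement's English description precedes it below -/
import Mathlib

section
/- Let α > 0, p ∈ (2d/(d+1), ∞), q ∈ (0, ∞], b > 1/q. Let F₀ : (0,∞) → [0,∞) be non-increasing (or general monotone with F₀(u) ≲ F₀(z) for z ≤ u ≤ 2z). If q ≥ p, then (∫₁^∞ t^{αq}(1+log t)^{−bq}(∫_t^∞ u^{dp−d}F₀(u)^p du/u)^{q/p} dt/t)^{1/q} ≲ (∫₁^∞ (1+log t)^{−bq}(∫₁^t u^{αp+dp−d}F₀(u)^p du/u)^{q/p} dt/t)^{1/q}. -/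
open MeasureTheory
open scoped ENNReal

section Helpers

open Set Filter Topology

private lemma rpow_split (x : ℝ≥0∞) {a c : ℝ} (ha : 0 < a) (hc : 0 < c) :
    x ^ (a + c) = x ^ a * x ^ c := by
  rcases eq_or_ne x 0 with rfl | hx0
  · rw [ENNReal.zero_rpow_of_pos ha, ENNReal.zero_rpow_of_pos hc,
      ENNReal.zero_rpow_of_pos (by linarith), zero_mul]
  rcases eq_or_ne x ⊤ with rfl | hxt
  · rw [ENNReal.top_rpow_of_pos ha, ENNReal.top_rpow_of_pos hc,
      ENNReal.top_rpow_of_pos (by linarith)]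
    simp
  · exact ENNReal.rpow_add _ _ hx0 hxt

private lemma fubini_aux {h g : ℝ → ℝ≥0∞} (hh : Measurable h) (hg : Measurable g) :
    (∫⁻ t in Ioi (1:ℝ), h t * ∫⁻ u in Ioi t, g u)
      = ∫⁻ u in Ioi (1:ℝ), g u * ∫⁻ t in Ioo 1 u, h t := by
  have hs : MeasurableSet {p : ℝ × ℝ | p.1 < p.2} :=
    measurableSet_lt measurable_fst measurable_snd
  set f : ℝ → ℝ → ℝ≥0∞ :=
    fun t u => ({p : ℝ × ℝ | p.1 < p.2}).indicator (fun p => h p.1 * g p.2) (t, u) with hf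
  have hmeas : Measurable (Function.uncurry f) := by
    have : Function.uncurry f = ({p : ℝ × ℝ | p.1 < p.2}).indicator (fun p => h p.1 * g p.2) :=
      rfl
    rw [this]
    exact ((hh.comp measurable_fst).mul (hg.comp measurable_snd)).indicator hs
  have key := lintegral_lintegral_swap (μ := volume.restrict (Ioi (1:ℝ)))
    (ν := volume.restrict (Ioi (1:ℝ))) hmeas.aemeasurable
  have h1 : ∀ t ∈ Ioi (1:ℝ), (∫⁻ u in Ioi (1:ℝ), f t u) = h t * ∫⁻ u in Ioi t, g u := by
    intro t ht
    have hft : ∀ u, f t u = (Ioi t).indicator (fun u => h t * g u) u := by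
      intro u
      by_cases hu : t < u
      · simp [hf, Set.indicator, hu]
      · simp [hf, Set.indicator, hu]
    calc (∫⁻ u in Ioi (1:ℝ), f t u)
        = ∫⁻ u in Ioi (1:ℝ), (Ioi t).indicator (fun u => h t * g u) u := by
          exact lintegral_congr fun u => hft u
      _ = ∫⁻ u in Ioi t, h t * g u := by
          rw [lintegral_indicator measurableSet_Ioi,
            Measure.restrict_restrict measurableSet_Ioi, Set.Ioi_inter_Ioi,
            max_eq_left (le_of_lt ht)]
      _ = h t * ∫⁻ u in Ioi t, g u := lintegral_const_mul _ hg
  have h2 : ∀ u ∈ Ioi (1:ℝ), (∫⁻ t in Ioi (1:ℝ), f t u) = g u * ∫⁻ t in Ioo 1 u, h t := by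
    intro u hu
    have hft : ∀ t, f t u = (Iio u).indicator (fun t => h t * g u) t := by
      intro t
      by_cases ht : t < u
      · simp [hf, Set.indicator, ht]
      · simp [hf, Set.indicator, ht]
    calc (∫⁻ t in Ioi (1:ℝ), f t u)
        = ∫⁻ t in Ioi (1:ℝ), (Iio u).indicator (fun t => h t * g u) t :=
          lintegral_congr fun t => hft t
      _ = ∫⁻ t in Ioo 1 u, h t * g u := by
          rw [lintegral_indicator measurableSet_Iio,
            Measure.restrict_restrict measurableSet_Iio, Set.Iio_inter_Ioi]
      _ = (∫⁻ t in Ioo 1 u, h t) * g u := lintegral_mul_const _ hh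
      _ = g u * ∫⁻ t in Ioo 1 u, h t := mul_comm _ _
  calc (∫⁻ t in Ioi (1:ℝ), h t * ∫⁻ u in Ioi t, g u)
      = ∫⁻ t in Ioi (1:ℝ), ∫⁻ u in Ioi (1:ℝ), f t u :=
        (setLIntegral_congr_fun measurableSet_Ioi h1).symm
    _ = ∫⁻ u in Ioi (1:ℝ), ∫⁻ t in Ioi (1:ℝ), f t u := key
    _ = ∫⁻ u in Ioi (1:ℝ), g u * ∫⁻ t in Ioo 1 u, h t :=
        setLIntegral_congr_fun measurableSet_Ioi h2

private lemma mink {w g : ℝ → ℝ≥0∞} (hw : Measurable w) (hg : Measurable g) {r : ℝ}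
    (hr : 1 ≤ r)
    (hL : (∫⁻ t in Ioi (1:ℝ), w t * (∫⁻ u in Ioi t, g u) ^ r) ≠ ⊤) :
    (∫⁻ t in Ioi (1:ℝ), w t * (∫⁻ u in Ioi t, g u) ^ r) ^ (1/r)
      ≤ ∫⁻ u in Ioi (1:ℝ), g u * (∫⁻ t in Ioo (1:ℝ) u, w t) ^ (1/r) := by
  have hr0 : (0:ℝ) < r := by linarith
  set T : ℝ → ℝ≥0∞ := fun t => ∫⁻ u in Ioi t, g u with hT
  have hT_anti : Antitone T := fun s t hst => lintegral_mono_set (Set.Ioi_subset_Ioi hst)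
  have hTm : Measurable T := hT_anti.measurable
  set Φ : ℝ → ℝ≥0∞ := fun u => ∫⁻ t in Ioo (1:ℝ) u, w t with hΦ
  have hΦ_mono : Monotone Φ := fun s t hst =>
    lintegral_mono_set (Set.Ioo_subset_Ioo_right hst)
  have hΦm : Measurable Φ := hΦ_mono.measurable
  set L : ℝ≥0∞ := ∫⁻ t in Ioi (1:ℝ), w t * T t ^ r with hLdef
  rcases eq_or_lt_of_le hr with hr1 | hr1
  · -- r = 1
    have hL1 : L = ∫⁻ t in Ioi (1:ℝ), w t * T t := by
      rw [hLdef, ← hr1]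
      exact lintegral_congr fun t => by rw [ENNReal.rpow_one]
    rw [hL1, ← hr1]
    simp only [one_div_one, ENNReal.rpow_one]
    exact le_of_eq (fubini_aux hw hg)
  · -- 1 < r
    have hrne : r ≠ 0 := ne_of_gt hr0
    have hconj : Real.HolderConjugate r (r / (r-1)) := Real.HolderConjugate.conjExponent hr1
    set r' : ℝ := r / (r - 1) with hr'def
    have hr'0 : (0:ℝ) < r' := hconj.symm.pos
    have hsum : 1/r + 1/r' = 1 := by
      rw [one_div, one_div]; exact hconj.inv_add_inv_eq_one
    have hTr1 : Measurable fun t => T t ^ (r - 1) :=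
      ENNReal.continuous_rpow_const.measurable.comp hTm
    have key : L = ∫⁻ u in Ioi (1:ℝ), g u * ∫⁻ t in Ioo 1 u, w t * T t ^ (r-1) := by
      have h1 : ∀ t : ℝ, w t * T t ^ r = (w t * T t ^ (r-1)) * T t := by
        intro t
        rw [show r = (r-1) + 1 by ring, rpow_split _ (by linarith) one_pos,
          ENNReal.rpow_one]
        ring
      calc L = ∫⁻ t in Ioi (1:ℝ), (fun s => w s * T s ^ (r-1)) t * T t :=
            lintegral_congr fun t => h1 t
        _ = _ := fubini_aux (hw.mul hTr1) hg
    have inner_bd : ∀ u, (∫⁻ t in Ioo (1:ℝ) u, w t * T t ^ (r-1))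
        ≤ Φ u ^ (1/r) * L ^ (1/r') := by
      intro u
      have hpt : ∀ t : ℝ, w t * T t ^ (r-1)
          = ((fun s => w s ^ (1/r)) * fun s => w s ^ (1/r') * T s ^ (r-1)) t := by
        intro t
        simp only [Pi.mul_apply]
        rw [← mul_assoc, ← rpow_split (w t) (by positivity) (by positivity), hsum,
          ENNReal.rpow_one]
      have hA : AEMeasurable (fun s => w s ^ (1/r))
          (volume.restrict (Ioo (1:ℝ) u)) :=
        (ENNReal.continuous_rpow_const.measurable.comp hw).aemeasurable
      have hB : AEMeasurable (fun s => w s ^ (1/r') * T s ^ (r-1))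
          (volume.restrict (Ioo (1:ℝ) u)) :=
        ((ENNReal.continuous_rpow_const.measurable.comp hw).mul hTr1).aemeasurable
      calc (∫⁻ t in Ioo (1:ℝ) u, w t * T t ^ (r-1))
          = ∫⁻ t in Ioo (1:ℝ) u,
              ((fun s => w s ^ (1/r)) * fun s => w s ^ (1/r') * T s ^ (r-1)) t :=
            lintegral_congr fun t => hpt t
        _ ≤ (∫⁻ t in Ioo (1:ℝ) u, (w t ^ (1/r)) ^ r) ^ (1/r)
              * (∫⁻ t in Ioo (1:ℝ) u, (w t ^ (1/r') * T t ^ (r-1)) ^ r') ^ (1/r') :=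
            ENNReal.lintegral_mul_le_Lp_mul_Lq _ hconj hA hB
        _ = (∫⁻ t in Ioo (1:ℝ) u, w t) ^ (1/r)
              * (∫⁻ t in Ioo (1:ℝ) u, w t * T t ^ r) ^ (1/r') := by
            congr 1
            · congr 1
              refine lintegral_congr fun t => ?_
              rw [← ENNReal.rpow_mul, one_div_mul_cancel hrne, ENNReal.rpow_one]
            · congr 1
              refine lintegral_congr fun t => ?_
              rw [ENNReal.mul_rpow_of_nonneg _ _ (le_of_lt hr'0), ← ENNReal.rpow_mul,
                ← ENNReal.rpow_mul, one_div_mul_cancel (ne_of_gt hr'0),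
                ENNReal.rpow_one, hconj.sub_one_mul_conj]
        _ ≤ Φ u ^ (1/r) * L ^ (1/r') := by
            gcongr
            exact lintegral_mono_set Set.Ioo_subset_Ioi_self
    have main : L ≤ (∫⁻ u in Ioi (1:ℝ), g u * Φ u ^ (1/r)) * L ^ (1/r') := by
      calc L = ∫⁻ u in Ioi (1:ℝ), g u * ∫⁻ t in Ioo 1 u, w t * T t ^ (r-1) := key
        _ ≤ ∫⁻ u in Ioi (1:ℝ), g u * (Φ u ^ (1/r) * L ^ (1/r')) := by
            refine lintegral_mono fun u => ?_
            exact mul_le_mul_right (inner_bd u) _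
        _ = ∫⁻ u in Ioi (1:ℝ), (g u * Φ u ^ (1/r)) * L ^ (1/r') :=
            lintegral_congr fun u => by ring
        _ = (∫⁻ u in Ioi (1:ℝ), g u * Φ u ^ (1/r)) * L ^ (1/r') :=
            lintegral_mul_const _
              (hg.mul (ENNReal.continuous_rpow_const.measurable.comp hΦm))
    rcases eq_or_ne L 0 with hL0 | hL0
    · rw [hL0, ENNReal.zero_rpow_of_pos (by positivity)]
      exact zero_le
    · have h1 : L ^ (1/r') ≠ 0 := by
        simp only [ne_eq, ENNReal.rpow_eq_zero_iff, not_or, not_and]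
        constructor
        · intro h; exact absurd h hL0
        · intro h; exact absurd h hL
      have h2 : L ^ (1/r') ≠ ⊤ := by
        simp only [ne_eq, ENNReal.rpow_eq_top_iff, not_or, not_and]
        constructor
        · intro h; linarith [hr'0, (by positivity : (0:ℝ) < 1/r')]
        · intro h; exact absurd h hL
      rw [← ENNReal.mul_le_mul_iff_left h1 h2]
      calc L ^ (1/r) * L ^ (1/r') = L ^ ((1/r) + (1/r')) :=
            (rpow_split L (by positivity) (by positivity)).symm
        _ = L := by rw [hsum, ENNReal.rpow_one]
        _ ≤ _ := main

private lemma log_tail {e : ℝ} (he : 0 < e) {u : ℝ} (hu : 1 ≤ u) :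
    (∫⁻ t in Ioi u, ENNReal.ofReal ((1 + Real.log t) ^ (-(e+1)) * t⁻¹))
      = ENNReal.ofReal ((1 + Real.log u) ^ (-e) / e) := by
  set f : ℝ → ℝ := fun t => -(1/e) * (1 + Real.log t) ^ (-e) with hfdef
  set f' : ℝ → ℝ := fun t => (1 + Real.log t) ^ (-(e+1)) * t⁻¹ with hf'def
  have hlogpos : ∀ x : ℝ, u ≤ x → 0 < 1 + Real.log x := by
    intro x hx
    have h1 : (0:ℝ) ≤ Real.log x := Real.log_nonneg (le_trans hu hx)
    linarith
  have hderiv : ∀ x ∈ Ioi u, HasDerivAt f (f' x) x := by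
    intro x hx
    have hx0 : (0:ℝ) < x := lt_of_lt_of_le one_pos (le_trans hu (le_of_lt hx))
    have h1 : HasDerivAt (fun t : ℝ => 1 + Real.log t) x⁻¹ x :=
      ((Real.hasDerivAt_log (ne_of_gt hx0)).const_add 1)
    have h2 := h1.rpow_const (p := -e) (Or.inl (ne_of_gt (hlogpos x (le_of_lt hx))))
    have h3 := h2.const_mul (-(1/e))
    refine (h3.congr_deriv ?_ : HasDerivAt f _ x); symm
    show (1 + Real.log x) ^ (-(e+1)) * x⁻¹ = -(1 / e) * (x⁻¹ * -e * (1 + Real.log x) ^ (-e - 1))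
    have he' : e ≠ 0 := ne_of_gt he
    rw [show (-(e+1) : ℝ) = -e - 1 by ring]
    field_simp
  have hcont : ContinuousWithinAt f (Ici u) u := by
    have hu0 : (0:ℝ) < u := lt_of_lt_of_le one_pos hu
    have h1 : HasDerivAt (fun t : ℝ => 1 + Real.log t) u⁻¹ u :=
      ((Real.hasDerivAt_log (ne_of_gt hu0)).const_add 1)
    have h2 := h1.rpow_const (p := -e) (Or.inl (ne_of_gt (hlogpos u le_rfl)))
    exact ((h2.const_mul (-(1/e))).continuousAt).continuousWithinAt
  have htends : Tendsto f atTop (𝓝 0) := by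
    have h1 : Tendsto (fun t : ℝ => 1 + Real.log t) atTop atTop :=
      Filter.tendsto_atTop_add_const_left _ 1 Real.tendsto_log_atTop
    have h2 : Tendsto (fun t : ℝ => (1 + Real.log t) ^ (-e)) atTop (𝓝 0) :=
      (tendsto_rpow_neg_atTop he).comp h1
    have h4 : Tendsto f atTop (𝓝 (-(1/e) * 0)) := h2.const_mul (-(1/e))
    simpa using h4
  have hpos : ∀ x ∈ Ioi u, 0 ≤ f' x := by
    intro x hx
    have hx0 : (0:ℝ) < x := lt_of_lt_of_le one_pos (le_trans hu (le_of_lt hx))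
    have := hlogpos x (le_of_lt hx)
    positivity
  have hint : IntegrableOn f' (Ioi u) :=
    integrableOn_Ioi_deriv_of_nonneg hcont hderiv hpos htends
  have heq : (∫ x in Ioi u, f' x) = 0 - f u :=
    integral_Ioi_of_hasDerivAt_of_tendsto hcont hderiv hint htends
  have h2 : (∫⁻ t in Ioi u, ENNReal.ofReal (f' t)) = ENNReal.ofReal (∫ t in Ioi u, f' t) :=
    (ofReal_integral_eq_lintegral_ofReal hint
      ((ae_restrict_iff' measurableSet_Ioi).2 (ae_of_all _ hpos))).symm
  rw [h2, heq]
  congr 1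
  rw [hfdef]
  simp only [zero_sub, neg_mul, neg_neg]
  field_simp


private lemma head_weight {c e : ℝ} (hc : 0 < c) (he : 0 < e) :
    ∃ K : ℝ, 0 < K ∧ ∀ u : ℝ, 1 < u →
      (∫⁻ t in Ioo (1:ℝ) u, ENNReal.ofReal (t ^ c * (1 + Real.log t) ^ (-e) * t⁻¹))
        ≤ ENNReal.ofReal (K * (u ^ c * (1 + Real.log u) ^ (-e))) := by
  set A : ℝ := max 1 (2*e/c) with hA
  have hA1 : (1:ℝ) ≤ A := le_max_left _ _
  have hA0 : (0:ℝ) < A := lt_of_lt_of_le one_pos hA1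
  have hAe : 2*e/c ≤ A := le_max_right _ _
  have heA : e / A ≤ c / 2 := by
    have h2 : 2*e/c * c ≤ A * c := mul_le_mul_of_nonneg_right hAe (le_of_lt hc)
    rw [div_mul_cancel₀ _ (ne_of_gt hc)] at h2
    rw [div_le_div_iff₀ hA0 two_pos]
    linarith
  set K : ℝ := A ^ e * (2 / c) with hK
  have hAe0 : (0:ℝ) < A ^ e := Real.rpow_pos_of_pos hA0 _
  have hK0 : 0 < K := by positivity
  refine ⟨K, hK0, ?_⟩
  intro u hu
  have hu0 : (0:ℝ) < u := lt_trans one_pos hu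
  set φ : ℝ → ℝ := fun t => t ^ c * (A + Real.log t) ^ (-e) with hφ
  set Dφ : ℝ → ℝ := fun t =>
    c * t^(c-1) * (A + Real.log t)^(-e) - e * t^(c-1) * (A + Real.log t)^(-(e+1)) with hDφ
  have hbase : ∀ t : ℝ, 1 ≤ t → 0 < A + Real.log t := by
    intro t ht
    have := Real.log_nonneg ht; linarith
  have hderiv : ∀ x : ℝ, 1 ≤ x → HasDerivAt φ (Dφ x) x := by
    intro x hx
    have hx0 : (0:ℝ) < x := lt_of_lt_of_le one_pos hx
    have h1 : HasDerivAt (fun t : ℝ => t ^ c) (c * x ^ (c-1)) x :=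
      Real.hasDerivAt_rpow_const (Or.inl (ne_of_gt hx0))
    have h2 : HasDerivAt (fun t : ℝ => A + Real.log t) x⁻¹ x :=
      (Real.hasDerivAt_log (ne_of_gt hx0)).const_add A
    have h3 := h2.rpow_const (p := -e) (Or.inl (ne_of_gt (hbase x hx)))
    have h4 := h1.mul h3
    refine (h4.congr_deriv ?_ : HasDerivAt φ _ x); symm
    show Dφ x = c * x ^ (c-1) * (A + Real.log x)^(-e)
      + x ^ c * (x⁻¹ * (-e) * (A + Real.log x)^(-e-1))
    have hxc : x ^ c * x⁻¹ = x ^ (c-1) := by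
      rw [show c - 1 = c + (-1) by ring, Real.rpow_add hx0, Real.rpow_neg_one]
    have hee : (A + Real.log x) ^ (-(e+1)) = (A + Real.log x) ^ (-e-1) := by ring_nf
    have h5 : x ^ c * (x⁻¹ * (-e) * (A + Real.log x)^(-e-1))
        = -(e * x^(c-1) * (A + Real.log x)^(-e-1)) := by
      rw [← hxc]; ring
    simp only [hDφ]
    rw [hee, h5]
    ring
  have hφcont : ContinuousOn φ (Icc 1 u) := fun x hx =>
    ((hderiv x hx.1).continuousAt).continuousWithinAt
  have hD2 : ∀ t : ℝ, 1 ≤ t → (c/2) * (t ^ (c-1) * (A + Real.log t) ^ (-e)) ≤ Dφ t := by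
    intro t ht1
    have ht0 : (0:ℝ) < t := lt_of_lt_of_le one_pos ht1
    have hB : 0 < A + Real.log t := hbase t ht1
    have key : e * (A + Real.log t)^(-(e+1)) ≤ c/2 * (A + Real.log t)^(-e) := by
      have h1 : (A + Real.log t)^(-(e+1)) = (A + Real.log t)^(-e) * (A + Real.log t)⁻¹ := by
        rw [show -(e+1) = -e + (-1) by ring, Real.rpow_add hB, Real.rpow_neg_one]
      rw [h1]
      have h2 : (A + Real.log t)⁻¹ ≤ A⁻¹ := by
        apply inv_anti₀ hA0
        linarith [Real.log_nonneg ht1]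
      calc e * ((A + Real.log t)^(-e) * (A + Real.log t)⁻¹)
          ≤ e * ((A + Real.log t)^(-e) * A⁻¹) := by
            apply mul_le_mul_of_nonneg_left _ (le_of_lt he)
            exact mul_le_mul_of_nonneg_left h2 (Real.rpow_nonneg (le_of_lt hB) _)
        _ = (e / A) * (A + Real.log t)^(-e) := by
            rw [div_eq_mul_inv]; ring
        _ ≤ (c/2) * (A + Real.log t)^(-e) :=
            mul_le_mul_of_nonneg_right heA (Real.rpow_nonneg (le_of_lt hB) _)
    have hxpow : (0:ℝ) ≤ t ^ (c-1) := Real.rpow_nonneg (le_of_lt ht0) _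
    have h6 := mul_le_mul_of_nonneg_left key hxpow
    simp only [hDφ]
    nlinarith [h6]
  have hDpos : ∀ x ∈ Ioo (1:ℝ) u, 0 ≤ Dφ x := by
    intro x hx
    have hx1 : (1:ℝ) ≤ x := le_of_lt hx.1
    have hx0 : (0:ℝ) < x := lt_of_lt_of_le one_pos hx1
    have hB := hbase x hx1
    have h7 := hD2 x hx1
    have hxpow : (0:ℝ) ≤ x ^ (c-1) := Real.rpow_nonneg (le_of_lt hx0) _
    have h8 : (0:ℝ) ≤ (A + Real.log x) ^ (-e) := Real.rpow_nonneg (le_of_lt hB) _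
    have h9 : (0:ℝ) ≤ c/2 * (x^(c-1) * (A + Real.log x)^(-e)) :=
      mul_nonneg (by linarith) (mul_nonneg hxpow h8)
    exact le_trans h9 h7
  have hint : IntegrableOn Dφ (Ioc 1 u) :=
    intervalIntegral.integrableOn_deriv_of_nonneg hφcont
      (fun x hx => hderiv x (le_of_lt hx.1)) hDpos
  have hFTC : (∫ t in (1:ℝ)..u, Dφ t) = φ u - φ 1 :=
    intervalIntegral.integral_eq_sub_of_hasDerivAt_of_le (le_of_lt hu) hφcont
      (fun x hx => hderiv x (le_of_lt hx.1))
      ((intervalIntegrable_iff_integrableOn_Ioc_of_le (le_of_lt hu)).2 hint)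
  have hIoo : (∫ t in Ioo (1:ℝ) u, Dφ t) = φ u - φ 1 := by
    rw [← MeasureTheory.integral_Ioc_eq_integral_Ioo,
      ← intervalIntegral.integral_of_le (le_of_lt hu), hFTC]
  have hintIoo : IntegrableOn Dφ (Ioo 1 u) := hint.mono_set Set.Ioo_subset_Ioc_self
  have hpt : ∀ t ∈ Ioo (1:ℝ) u, t ^ c * (1 + Real.log t) ^ (-e) * t⁻¹ ≤ K * Dφ t := by
    intro t ht
    have ht1 : (1:ℝ) ≤ t := le_of_lt ht.1
    have ht0 : (0:ℝ) < t := lt_of_lt_of_le one_pos ht1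
    have hlog : 0 ≤ Real.log t := Real.log_nonneg ht1
    have h1t : (0:ℝ) < 1 + Real.log t := by linarith
    have hB : (0:ℝ) < A + Real.log t := hbase t ht1
    have hxc : t ^ c * t⁻¹ = t ^ (c-1) := by
      rw [show c - 1 = c + (-1) by ring, Real.rpow_add ht0, Real.rpow_neg_one]
    have hxpow : (0:ℝ) ≤ t ^ (c-1) := Real.rpow_nonneg (le_of_lt ht0) _
    have hcomp : (1 + Real.log t) ^ (-e) ≤ A ^ e * (A + Real.log t) ^ (-e) := by
      have h2 : A + Real.log t ≤ A * (1 + Real.log t) := by nlinarith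
      have h3 : (A * (1 + Real.log t)) ^ (-e) ≤ (A + Real.log t) ^ (-e) :=
        Real.rpow_le_rpow_of_nonpos hB h2 (by linarith)
      have h4 : (A * (1 + Real.log t)) ^ (-e) = A ^ (-e) * (1 + Real.log t) ^ (-e) :=
        Real.mul_rpow (le_of_lt hA0) (le_of_lt h1t)
      have h5 : A ^ e * (A ^ (-e) * (1 + Real.log t) ^ (-e))
          ≤ A ^ e * (A + Real.log t) ^ (-e) := by
        apply mul_le_mul_of_nonneg_left _ (le_of_lt hAe0)
        rw [← h4]; exact h3
      have h6 : A ^ e * A ^ (-e) = 1 := by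
        rw [← Real.rpow_add hA0]; simp
      calc (1 + Real.log t) ^ (-e) = A ^ e * A ^ (-e) * (1 + Real.log t) ^ (-e) := by
            rw [h6, one_mul]
        _ = A ^ e * (A ^ (-e) * (1 + Real.log t) ^ (-e)) := by ring
        _ ≤ A ^ e * (A + Real.log t) ^ (-e) := h5
    calc t ^ c * (1 + Real.log t) ^ (-e) * t⁻¹
        = t ^ (c-1) * (1 + Real.log t)^(-e) := by rw [← hxc]; ring
      _ ≤ t ^ (c-1) * (A ^ e * (A + Real.log t)^(-e)) :=
          mul_le_mul_of_nonneg_left hcomp hxpow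
      _ = A ^ e * (2/c) * ((c/2) * (t^(c-1) * (A + Real.log t)^(-e))) := by
          field_simp
      _ ≤ K * Dφ t := by
          rw [hK]
          exact mul_le_mul_of_nonneg_left (hD2 t ht1) (by positivity)
  have hDmeas : Measurable Dφ := by
    have m1 : Measurable fun t : ℝ => t ^ (c-1) := by fun_prop
    have m0 : Measurable fun y : ℝ => y ^ (-e) := by fun_prop
    have m0' : Measurable fun y : ℝ => y ^ (-(e+1)) := by fun_prop
    have m2 : Measurable fun t : ℝ => (A + Real.log t) ^ (-e) :=
      m0.comp (measurable_const.add Real.measurable_log)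
    have m3 : Measurable fun t : ℝ => (A + Real.log t) ^ (-(e+1)) :=
      m0'.comp (measurable_const.add Real.measurable_log)
    rw [hDφ]
    exact ((m1.const_mul c).mul m2).sub ((m1.const_mul e).mul m3)
  calc (∫⁻ t in Ioo (1:ℝ) u, ENNReal.ofReal (t ^ c * (1 + Real.log t) ^ (-e) * t⁻¹))
      ≤ ∫⁻ t in Ioo (1:ℝ) u, ENNReal.ofReal (K * Dφ t) := by
        refine setLIntegral_mono_ae
          ((ENNReal.measurable_ofReal.comp (hDmeas.const_mul K)).aemeasurable)
          (ae_of_all _ fun t ht => ENNReal.ofReal_le_ofReal (hpt t ht))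
    _ = ENNReal.ofReal (∫ t in Ioo (1:ℝ) u, K * Dφ t) := by
        refine (ofReal_integral_eq_lintegral_ofReal (hintIoo.const_mul K) ?_).symm
        refine (ae_restrict_iff' measurableSet_Ioo).2 (ae_of_all _ fun t ht => ?_)
        exact mul_nonneg (le_of_lt hK0) (hDpos t ht)
    _ = ENNReal.ofReal (K * (φ u - φ 1)) := by
        rw [integral_const_mul, hIoo]
    _ ≤ ENNReal.ofReal (K * (u ^ c * (1 + Real.log u) ^ (-e))) := by
        apply ENNReal.ofReal_le_ofReal
        apply mul_le_mul_of_nonneg_left _ (le_of_lt hK0)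
        have hφ1 : 0 ≤ φ 1 := by
          rw [hφ]
          simp only [Real.one_rpow, Real.log_one, add_zero, one_mul]
          exact Real.rpow_nonneg (le_of_lt hA0) _
        have hφu : φ u ≤ u ^ c * (1 + Real.log u) ^ (-e) := by
          rw [hφ]
          apply mul_le_mul_of_nonneg_left _ (Real.rpow_nonneg (le_of_lt hu0) _)
          apply Real.rpow_le_rpow_of_nonpos _ _ (by linarith)
          · linarith [Real.log_nonneg (le_of_lt hu)]
          · linarith
        linarith


end Helpers

/-- for `α > 0`, `2d/(d+1) < p`, `0 < q`, `p ≤ q`, `b > 1/q` and a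
general monotone (e.g. non-increasing) non-negative function `F₀`,
`(∫₁^∞ t^{αq}(1+log t)^{−bq}(∫_t^∞ u^{dp−d}F₀(u)^p du/u)^{q/p} dt/t)^{1/q}
  ≲ (∫₁^∞ (1+log t)^{−bq}(∫₁^t u^{αp+dp−d}F₀(u)^p du/u)^{q/p} dt/t)^{1/q}`. -/
theorem GM_tail_dominated_by_head (d : ℕ) (hd : 1 ≤ d) (α p q b : ℝ)
    (hα : 0 < α) (hp : 2*(d:ℝ)/((d:ℝ)+1) < p) (hq : 0 < q) (hpq : p ≤ q)
    (hb : 1/q < b) (D : ℝ≥0∞) (hD : D ≠ ⊤) :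
    ∃ C : ℝ≥0∞, C ≠ ⊤ ∧ ∀ F : ℝ → ℝ≥0∞, Measurable F →
      (∀ z u : ℝ, 0 < z → z ≤ u → u ≤ 2*z → F u ≤ D * F z) →
      (∫⁻ t in Set.Ioi (1:ℝ),
          ENNReal.ofReal (t ^ (α*q) * (1 + Real.log t) ^ (-(b*q))) *
            (∫⁻ u in Set.Ioi t,
              ENNReal.ofReal (u ^ ((d:ℝ)*p - d)) * (F u) ^ p *
                ENNReal.ofReal (u⁻¹)) ^ (q/p) *
            ENNReal.ofReal (t⁻¹)) ^ (1/q)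
      ≤ C * (∫⁻ t in Set.Ioi (1:ℝ),
          ENNReal.ofReal ((1 + Real.log t) ^ (-(b*q))) *
            (∫⁻ u in Set.Ioo (1:ℝ) t,
              ENNReal.ofReal (u ^ (α*p + (d:ℝ)*p - d)) * (F u) ^ p *
                ENNReal.ofReal (u⁻¹)) ^ (q/p) *
            ENNReal.ofReal (t⁻¹)) ^ (1/q) := by
  have hd1 : (1:ℝ) ≤ (d:ℝ) := by exact_mod_cast hd
  have hp1 : 1 < p := by
    have h0 : (0:ℝ) < (d:ℝ)+1 := by linarith
    have h1 : (1:ℝ) ≤ 2*(d:ℝ)/((d:ℝ)+1) := by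
      rw [le_div_iff₀ h0]; linarith
    linarith
  have hp0 : (0:ℝ) < p := by linarith
  have hq1 : 1 < q := lt_of_lt_of_le hp1 hpq
  have hb0 : (0:ℝ) < b := lt_trans (by positivity) hb
  set r : ℝ := q / p with hrdef
  have hr1 : 1 ≤ r := by rw [hrdef, le_div_iff₀ hp0]; linarith
  have hr0 : (0:ℝ) < r := by linarith
  have hrne : r ≠ 0 := ne_of_gt hr0
  have hinvr : (0:ℝ) < 1/r := div_pos one_pos hr0
  have hrp : r * p = q := by rw [hrdef]; field_simp
  have hαq : (0:ℝ) < α * q := by positivity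
  have hbq : (0:ℝ) < b * q := by positivity
  have hbp : (0:ℝ) < b * p := by positivity
  -- measurability helpers
  have mrpow : ∀ s : ℝ, Measurable fun y : ℝ => y ^ s := fun s => by fun_prop
  have mlog1 : Measurable fun t : ℝ => 1 + Real.log t :=
    measurable_const.add Real.measurable_log
  have mlog : ∀ s : ℝ, Measurable fun t : ℝ => ENNReal.ofReal ((1 + Real.log t) ^ s) :=
    fun s => ENNReal.measurable_ofReal.comp ((mrpow s).comp mlog1)
  have mk : ∀ s : ℝ, Measurable fun t : ℝ => ENNReal.ofReal ((1 + Real.log t) ^ s * t⁻¹) :=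
    fun s => ENNReal.measurable_ofReal.comp ((((mrpow s).comp mlog1)).mul measurable_inv)
  have mw2 : ∀ s s' : ℝ,
      Measurable fun t : ℝ => ENNReal.ofReal ((1 + Real.log t) ^ s * (t⁻¹) ^ s') :=
    fun s s' => ENNReal.measurable_ofReal.comp
      ((((mrpow s).comp mlog1)).mul ((mrpow s').comp measurable_inv))
  have minv : Measurable fun t : ℝ => ENNReal.ofReal t⁻¹ :=
    ENNReal.measurable_ofReal.comp measurable_inv
  -- step 2 constant
  obtain ⟨K, hK0, hKbd⟩ := head_weight hαq hbq
  -- step 4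
  obtain ⟨c₅, hc₅top, hstep4⟩ :
      ∃ c₅ : ℝ≥0∞, c₅ ≠ ⊤ ∧ ∀ H : ℝ → ℝ≥0∞, Measurable H →
        (∫⁻ t in Set.Ioi (1:ℝ),
            ENNReal.ofReal ((1 + Real.log t) ^ (-(b*p+1)) * t⁻¹) * H t)
          ≤ c₅ * (∫⁻ t in Set.Ioi (1:ℝ),
              ENNReal.ofReal ((1 + Real.log t) ^ (-(b*q))) * H t ^ r *
                ENNReal.ofReal t⁻¹) ^ (1/r) := by
    rcases eq_or_lt_of_le hpq with hqp | hqp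
    · -- p = q
      refine ⟨1, ENNReal.one_ne_top, fun H hHm => ?_⟩
      have hr1' : r = 1 := by rw [hrdef, ← hqp]; field_simp
      rw [one_mul, hr1']
      simp only [one_div_one, ENNReal.rpow_one]
      refine setLIntegral_mono_ae (((mlog (-(b*q))).mul hHm).mul minv).aemeasurable
        (ae_of_all _ fun t ht => ?_)
      have h1t : (1:ℝ) ≤ 1 + Real.log t := by
        have := Real.log_nonneg (le_of_lt ht); linarith
      have hexp : (1 + Real.log t) ^ (-(b*p+1)) ≤ (1 + Real.log t) ^ (-(b*q)) :=
        Real.rpow_le_rpow_of_exponent_le h1t (by rw [← hqp]; linarith)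
      calc ENNReal.ofReal ((1 + Real.log t) ^ (-(b*p+1)) * t⁻¹) * H t
          = ENNReal.ofReal ((1 + Real.log t) ^ (-(b*p+1))) * H t * ENNReal.ofReal t⁻¹ := by
            rw [ENNReal.ofReal_mul (Real.rpow_nonneg (by linarith) _)]; ring
        _ ≤ ENNReal.ofReal ((1 + Real.log t) ^ (-(b*q))) * H t * ENNReal.ofReal t⁻¹ := by
            exact mul_le_mul_left (mul_le_mul_left (ENNReal.ofReal_le_ofReal hexp) _) _
    · -- p < q
      have hrr1 : 1 < r := by rw [hrdef, lt_div_iff₀ hp0]; linarith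
      have hconj : Real.HolderConjugate r (r/(r-1)) := Real.HolderConjugate.conjExponent hrr1
      set r' : ℝ := r/(r-1) with hr'def
      have hr'1 : 1 < r' := hconj.symm.lt
      have hr'0 : (0:ℝ) < r' := by linarith
      have hr'ne : r' ≠ 0 := ne_of_gt hr'0
      have he' : (0:ℝ) < r' - 1 := by linarith
      have hinvr' : (0:ℝ) < 1/r' := div_pos one_pos hr'0
      have hsum : 1/r + 1/r' = 1 := by rw [one_div, one_div]; exact hconj.inv_add_inv_eq_one
      refine ⟨ENNReal.ofReal (1/(r'-1)) ^ (1/r'), ?_, fun H hHm => ?_⟩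
      · exact ENNReal.rpow_ne_top_of_nonneg (le_of_lt hinvr') ENNReal.ofReal_ne_top
      set A : ℝ → ℝ≥0∞ :=
        fun t => H t * ENNReal.ofReal ((1 + Real.log t) ^ (-(b*p)) * (t⁻¹) ^ (1/r)) with hAdef
      set B : ℝ → ℝ≥0∞ :=
        fun t => ENNReal.ofReal ((1 + Real.log t) ^ (-(1:ℝ)) * (t⁻¹) ^ (1/r')) with hBdef
      have hAmeas : Measurable A := hHm.mul (mw2 (-(b*p)) (1/r))
      have hBmeas : Measurable B := mw2 (-(1:ℝ)) (1/r')
      have hABeq : ∀ t ∈ Set.Ioi (1:ℝ),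
          ENNReal.ofReal ((1 + Real.log t) ^ (-(b*p+1)) * t⁻¹) * H t = (A * B) t := by
        intro t ht
        have ht1 : (1:ℝ) < t := ht
        have ht0 : (0:ℝ) < t := lt_trans one_pos ht1
        have h1t : (0:ℝ) < 1 + Real.log t := by
          have := Real.log_nonneg (le_of_lt ht1); linarith
        have hti : (0:ℝ) < t⁻¹ := by positivity
        have e1 : (1 + Real.log t)^(-(b*p)) * (1 + Real.log t)^(-(1:ℝ))
            = (1 + Real.log t)^(-(b*p+1)) := by
          rw [← Real.rpow_add h1t]; ring_nf
        have e2 : (t⁻¹)^(1/r) * (t⁻¹)^(1/r') = t⁻¹ := by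
          rw [← Real.rpow_add hti, hsum, Real.rpow_one]
        have e3 : ((1 + Real.log t)^(-(b*p)) * (t⁻¹)^(1/r)) *
            ((1 + Real.log t)^(-(1:ℝ)) * (t⁻¹)^(1/r'))
            = (1 + Real.log t) ^ (-(b*p+1)) * t⁻¹ := by
          calc ((1 + Real.log t)^(-(b*p)) * (t⁻¹)^(1/r)) *
              ((1 + Real.log t)^(-(1:ℝ)) * (t⁻¹)^(1/r'))
              = ((1 + Real.log t)^(-(b*p)) * (1 + Real.log t)^(-(1:ℝ))) *
                ((t⁻¹)^(1/r) * (t⁻¹)^(1/r')) := by ring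
            _ = (1 + Real.log t) ^ (-(b*p+1)) * t⁻¹ := by rw [e1, e2]
        simp only [hAdef, hBdef, Pi.mul_apply]
        rw [mul_comm (ENNReal.ofReal ((1 + Real.log t) ^ (-(b*p+1)) * t⁻¹)) (H t),
          mul_assoc, ← ENNReal.ofReal_mul (by positivity), e3]
      have hAr : ∀ t ∈ Set.Ioi (1:ℝ), A t ^ r
          = ENNReal.ofReal ((1 + Real.log t) ^ (-(b*q))) * H t ^ r * ENNReal.ofReal t⁻¹ := by
        intro t ht
        have ht0 : (0:ℝ) < t := lt_trans one_pos ht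
        have h1t : (0:ℝ) < 1 + Real.log t := by
          have := Real.log_nonneg (le_of_lt ht); linarith
        have hti : (0:ℝ) < t⁻¹ := by positivity
        have e3 : ((1 + Real.log t)^(-(b*p)))^r = (1 + Real.log t)^(-(b*q)) := by
          rw [← Real.rpow_mul (le_of_lt h1t)]
          congr 1
          rw [← hrp]; ring
        have e4 : ((t⁻¹)^(1/r))^r = t⁻¹ := by
          rw [← Real.rpow_mul (le_of_lt hti), one_div_mul_cancel hrne, Real.rpow_one]
        simp only [hAdef]
        rw [ENNReal.mul_rpow_of_nonneg _ _ (le_of_lt hr0),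
          ENNReal.ofReal_rpow_of_nonneg (by positivity) (le_of_lt hr0),
          Real.mul_rpow (Real.rpow_nonneg (le_of_lt h1t) _) (Real.rpow_nonneg (le_of_lt hti) _),
          e3, e4, ENNReal.ofReal_mul (Real.rpow_nonneg (le_of_lt h1t) _)]
        ring
      have hBr : ∀ t ∈ Set.Ioi (1:ℝ), B t ^ r'
          = ENNReal.ofReal ((1 + Real.log t) ^ (-(r'-1+1)) * t⁻¹) := by
        intro t ht
        have ht0 : (0:ℝ) < t := lt_trans one_pos ht
        have h1t : (0:ℝ) < 1 + Real.log t := by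
          have := Real.log_nonneg (le_of_lt ht); linarith
        have hti : (0:ℝ) < t⁻¹ := by positivity
        simp only [hBdef]
        rw [ENNReal.ofReal_rpow_of_nonneg (by positivity) (le_of_lt hr'0),
          Real.mul_rpow (Real.rpow_nonneg (le_of_lt h1t) _) (Real.rpow_nonneg (le_of_lt hti) _),
          ← Real.rpow_mul (le_of_lt h1t), ← Real.rpow_mul (le_of_lt hti),
          one_div_mul_cancel hr'ne, Real.rpow_one]
        congr 2
        ring
      have hBint : (∫⁻ t in Set.Ioi (1:ℝ), B t ^ r') = ENNReal.ofReal (1/(r'-1)) := by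
        rw [setLIntegral_congr_fun measurableSet_Ioi hBr,
          log_tail he' (le_refl (1:ℝ))]
        norm_num [Real.log_one, Real.one_rpow]
      calc (∫⁻ t in Set.Ioi (1:ℝ),
            ENNReal.ofReal ((1 + Real.log t) ^ (-(b*p+1)) * t⁻¹) * H t)
          = ∫⁻ t in Set.Ioi (1:ℝ), (A * B) t :=
            setLIntegral_congr_fun measurableSet_Ioi hABeq
        _ ≤ (∫⁻ t in Set.Ioi (1:ℝ), A t ^ r) ^ (1/r) *
              (∫⁻ t in Set.Ioi (1:ℝ), B t ^ r') ^ (1/r') :=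
            ENNReal.lintegral_mul_le_Lp_mul_Lq _ hconj hAmeas.aemeasurable hBmeas.aemeasurable
        _ = (∫⁻ t in Set.Ioi (1:ℝ), ENNReal.ofReal ((1 + Real.log t) ^ (-(b*q))) * H t ^ r *
              ENNReal.ofReal t⁻¹) ^ (1/r) * ENNReal.ofReal (1/(r'-1)) ^ (1/r') := by
            rw [setLIntegral_congr_fun measurableSet_Ioi hAr, hBint]
        _ = ENNReal.ofReal (1/(r'-1)) ^ (1/r') *
              (∫⁻ t in Set.Ioi (1:ℝ), ENNReal.ofReal ((1 + Real.log t) ^ (-(b*q))) * H t ^ r *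
                ENNReal.ofReal t⁻¹) ^ (1/r) := mul_comm _ _
  -- the constant
  set c₄ : ℝ≥0∞ := ENNReal.ofReal (K ^ (1/r)) * (ENNReal.ofReal (b*p) * c₅) with hc₄def
  have hc₄top : c₄ ≠ ⊤ :=
    ENNReal.mul_ne_top ENNReal.ofReal_ne_top (ENNReal.mul_ne_top ENNReal.ofReal_ne_top hc₅top)
  refine ⟨(c₄ ^ r) ^ (1/q), ?_, ?_⟩
  · exact ENNReal.rpow_ne_top_of_nonneg (le_of_lt (div_pos one_pos hq))
      (ENNReal.rpow_ne_top_of_nonneg (le_of_lt hr0) hc₄top)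
  intro F hF _
  have hGmeas : Measurable fun u : ℝ =>
      ENNReal.ofReal (u ^ ((d:ℝ)*p - d)) * F u ^ p * ENNReal.ofReal u⁻¹ := by fun_prop
  have hgmeas : Measurable fun u : ℝ =>
      ENNReal.ofReal (u ^ (α*p + (d:ℝ)*p - d)) * F u ^ p * ENNReal.ofReal u⁻¹ := by fun_prop
  set G : ℝ → ℝ≥0∞ :=
    fun u => ENNReal.ofReal (u ^ ((d:ℝ)*p - d)) * F u ^ p * ENNReal.ofReal u⁻¹ with hGdef
  set g : ℝ → ℝ≥0∞ :=
    fun u => ENNReal.ofReal (u ^ (α*p + (d:ℝ)*p - d)) * F u ^ p * ENNReal.ofReal u⁻¹ with hgdef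
  set w : ℝ → ℝ≥0∞ :=
    fun t => ENNReal.ofReal (t ^ (α*q) * (1 + Real.log t) ^ (-(b*q))) * ENNReal.ofReal t⁻¹
    with hwdef
  have hwmeas : Measurable w :=
    (ENNReal.measurable_ofReal.comp
      ((mrpow (α*q)).mul ((mrpow (-(b*q))).comp mlog1))).mul minv
  set T : ℝ → ℝ≥0∞ := fun t => ∫⁻ u in Set.Ioi t, G u with hTdef
  set H : ℝ → ℝ≥0∞ := fun t => ∫⁻ u in Set.Ioo (1:ℝ) t, g u with hHdef
  have hHmono : Monotone H := fun s t hst => lintegral_mono_set (Set.Ioo_subset_Ioo_right hst)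
  have hHmeas : Measurable H := hHmono.measurable
  set R : ℝ≥0∞ := ∫⁻ t in Set.Ioi (1:ℝ),
    ENNReal.ofReal ((1 + Real.log t) ^ (-(b*q))) * H t ^ r * ENNReal.ofReal t⁻¹ with hRdef
  set L : ℝ≥0∞ := ∫⁻ t in Set.Ioi (1:ℝ), w t * T t ^ r with hLdef
  have hLgoal : (∫⁻ t in Set.Ioi (1:ℝ),
      ENNReal.ofReal (t ^ (α*q) * (1 + Real.log t) ^ (-(b*q))) * T t ^ r *
        ENNReal.ofReal t⁻¹) = L := by
    rw [hLdef]
    refine lintegral_congr fun t => ?_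
    rw [hwdef]; ring
  rw [hLgoal]
  suffices hLR : L ≤ c₄ ^ r * R by
    calc L ^ (1/q) ≤ (c₄ ^ r * R) ^ (1/q) :=
          ENNReal.rpow_le_rpow hLR (le_of_lt (div_pos one_pos hq))
      _ = (c₄ ^ r) ^ (1/q) * R ^ (1/q) :=
          ENNReal.mul_rpow_of_nonneg _ _ (le_of_lt (div_pos one_pos hq))
  -- truncation
  set Gn : ℕ → ℝ → ℝ≥0∞ :=
    fun n u => (Set.Ioo (1:ℝ) (n:ℝ)).indicator (fun v => min (G v) (n:ℝ≥0∞)) u with hGn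
  have hGnmeas : ∀ n, Measurable (Gn n) :=
    fun n => (hGmeas.min measurable_const).indicator measurableSet_Ioo
  have hGnmono : Monotone Gn := by
    intro m n hmn u
    by_cases hu : u ∈ Set.Ioo (1:ℝ) (m:ℝ)
    · have hu' : u ∈ Set.Ioo (1:ℝ) (n:ℝ) :=
        ⟨hu.1, lt_of_lt_of_le hu.2 (by exact_mod_cast hmn)⟩
      simp only [hGn, Set.indicator_of_mem hu, Set.indicator_of_mem hu']
      exact min_le_min le_rfl (by exact_mod_cast hmn)
    · simp only [hGn, Set.indicator_of_notMem hu]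
      exact zero_le
  have hGnle : ∀ n u, Gn n u ≤ G u := by
    intro n u
    by_cases hu : u ∈ Set.Ioo (1:ℝ) (n:ℝ)
    · simp only [hGn, Set.indicator_of_mem hu]; exact min_le_left _ _
    · simp only [hGn, Set.indicator_of_notMem hu]; exact zero_le
  have hGnsup : ∀ u : ℝ, 1 < u → (⨆ n, Gn n u) = G u := by
    intro u hu
    apply le_antisymm (iSup_le fun n => hGnle n u)
    rcases eq_or_ne (G u) ⊤ with htop | hfin
    · rw [htop, ← ENNReal.iSup_natCast]
      apply iSup_le
      intro m
      obtain ⟨j, hj⟩ := exists_nat_gt u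
      refine le_trans ?_ (le_iSup (fun n => Gn n u) (max m j + 1))
      have hum : u ∈ Set.Ioo (1:ℝ) ((max m j + 1 : ℕ):ℝ) := by
        refine ⟨hu, ?_⟩
        have h1 : (j:ℝ) ≤ ((max m j + 1 : ℕ):ℝ) := by
          exact_mod_cast Nat.le_succ_of_le (le_max_right m j)
        linarith
      simp only [hGn, Set.indicator_of_mem hum, htop]
      rw [min_eq_right le_top]
      exact_mod_cast Nat.le_succ_of_le (le_max_left m j)
    · obtain ⟨m, hm⟩ := ENNReal.exists_nat_gt hfin
      obtain ⟨j, hj⟩ := exists_nat_gt u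
      have hum : u ∈ Set.Ioo (1:ℝ) ((max m j + 1 : ℕ):ℝ) := by
        refine ⟨hu, ?_⟩
        have h1 : (j:ℝ) ≤ ((max m j + 1 : ℕ):ℝ) := by
          exact_mod_cast Nat.le_succ_of_le (le_max_right m j)
        linarith
      refine le_trans ?_ (le_iSup (fun k => Gn k u) (max m j + 1))
      simp only [hGn, Set.indicator_of_mem hum]
      rw [min_eq_left]
      have h2 : ((m:ℕ):ℝ≥0∞) ≤ ((max m j + 1 : ℕ):ℝ≥0∞) := by
        exact_mod_cast Nat.le_succ_of_le (le_max_left m j)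
      exact le_trans (le_of_lt hm) h2
  set Tn : ℕ → ℝ → ℝ≥0∞ := fun n t => ∫⁻ u in Set.Ioi t, Gn n u with hTn
  have hTnanti : ∀ n, Antitone (Tn n) :=
    fun n s t hst => lintegral_mono_set (Set.Ioi_subset_Ioi hst)
  have hTnmeas : ∀ n, Measurable (Tn n) := fun n => (hTnanti n).measurable
  have hTnmono : ∀ t, Monotone fun n => Tn n t :=
    fun t m n hmn => lintegral_mono fun u => hGnmono hmn u
  have hTsup : ∀ t : ℝ, 1 ≤ t → T t = ⨆ n, Tn n t := by
    intro t ht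
    have h1 : T t = ∫⁻ u in Set.Ioi t, ⨆ n, Gn n u := by
      show (∫⁻ u in Set.Ioi t, G u) = _
      refine setLIntegral_congr_fun measurableSet_Ioi fun u hu => ?_
      exact (hGnsup u (lt_of_le_of_lt ht hu)).symm
    rw [h1, lintegral_iSup hGnmeas hGnmono]
  have hTpow : ∀ t : ℝ, 1 ≤ t → T t ^ r = ⨆ n, Tn n t ^ r := by
    intro t ht
    rw [hTsup t ht]
    have hmono := hTnmono t
    have h2 : Filter.Tendsto (fun n => Tn n t ^ r) Filter.atTop
        (nhds ((⨆ n, Tn n t) ^ r)) :=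
      (ENNReal.continuous_rpow_const.tendsto _).comp (tendsto_atTop_iSup hmono)
    have h3 : Monotone fun n => Tn n t ^ r :=
      fun m n hmn => ENNReal.rpow_le_rpow (hmono hmn) (le_of_lt hr0)
    exact tendsto_nhds_unique h2 (tendsto_atTop_iSup h3)
  set Ln : ℕ → ℝ≥0∞ := fun n => ∫⁻ t in Set.Ioi (1:ℝ), w t * Tn n t ^ r with hLn
  have hLsup : L = ⨆ n, Ln n := by
    rw [hLdef]
    calc (∫⁻ t in Set.Ioi (1:ℝ), w t * T t ^ r)
        = ∫⁻ t in Set.Ioi (1:ℝ), ⨆ n, w t * Tn n t ^ r := by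
          refine setLIntegral_congr_fun measurableSet_Ioi fun t ht => ?_
          rw [hTpow t (le_of_lt ht), ENNReal.mul_iSup]
      _ = ⨆ n, Ln n :=
          lintegral_iSup
            (fun n => hwmeas.mul (ENNReal.continuous_rpow_const.measurable.comp (hTnmeas n)))
            (fun m n hmn t =>
              mul_le_mul_right (ENNReal.rpow_le_rpow (hTnmono t hmn) (le_of_lt hr0)) _)
  have hLnfin : ∀ n, Ln n ≠ ⊤ := by
    intro n
    set Kn : ℝ≥0∞ := (n:ℝ≥0∞) * volume (Set.Ioo (1:ℝ) (n:ℝ)) with hKn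
    have hKnfin : Kn ≠ ⊤ := ENNReal.mul_ne_top (ENNReal.natCast_ne_top n)
      (by rw [Real.volume_Ioo]; exact ENNReal.ofReal_ne_top)
    have hTnbd : ∀ t, Tn n t ≤ Kn := by
      intro t
      calc Tn n t ≤ ∫⁻ u, Gn n u := setLIntegral_le_lintegral _ _
        _ ≤ ∫⁻ u, (Set.Ioo (1:ℝ) (n:ℝ)).indicator (fun _ => (n:ℝ≥0∞)) u := by
            refine lintegral_mono fun u => ?_
            by_cases hu : u ∈ Set.Ioo (1:ℝ) (n:ℝ)
            · simp only [hGn, Set.indicator_of_mem hu]; exact min_le_right _ _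
            · simp only [hGn, Set.indicator_of_notMem hu]; exact zero_le
        _ = Kn := by
            rw [lintegral_indicator measurableSet_Ioo, setLIntegral_const]
    have hTnzero : ∀ t : ℝ, (n:ℝ) ≤ t → Tn n t = 0 := by
      intro t ht
      have hz : ∀ u ∈ Set.Ioi t, Gn n u = 0 := by
        intro u hu
        have hnm : u ∉ Set.Ioo (1:ℝ) (n:ℝ) :=
          fun hmem => absurd hmem.2 (not_lt.2 (le_trans ht (le_of_lt hu)))
        simp only [hGn, Set.indicator_of_notMem hnm]
      calc Tn n t = ∫⁻ u in Set.Ioi t, 0 :=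
            setLIntegral_congr_fun measurableSet_Ioi hz
        _ = 0 := lintegral_zero
    have hbound : ∀ t ∈ Set.Ioi (1:ℝ), w t * Tn n t ^ r
        ≤ (Set.Ioo (1:ℝ) (n:ℝ)).indicator
            (fun _ => ENNReal.ofReal ((n:ℝ) ^ (α*q)) * Kn ^ r) t := by
      intro t ht
      by_cases htn : t < (n:ℝ)
      · have hmem : t ∈ Set.Ioo (1:ℝ) (n:ℝ) := ⟨ht, htn⟩
        rw [Set.indicator_of_mem hmem]
        have ht0 : (0:ℝ) ≤ t := le_of_lt (lt_trans one_pos ht)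
        have hw : w t ≤ ENNReal.ofReal ((n:ℝ) ^ (α*q)) := by
          rw [hwdef]
          calc ENNReal.ofReal (t ^ (α*q) * (1 + Real.log t) ^ (-(b*q))) * ENNReal.ofReal t⁻¹
              ≤ ENNReal.ofReal ((n:ℝ) ^ (α*q)) * 1 := by
                refine mul_le_mul' (ENNReal.ofReal_le_ofReal ?_) (ENNReal.ofReal_le_one.2 ?_)
                · have h1 : t ^ (α*q) ≤ (n:ℝ) ^ (α*q) :=
                    Real.rpow_le_rpow ht0 (le_of_lt htn) (le_of_lt hαq)
                  have h2 : (1 + Real.log t) ^ (-(b*q)) ≤ 1 :=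
                    Real.rpow_le_one_of_one_le_of_nonpos
                      (by have := Real.log_nonneg (le_of_lt ht); linarith) (by linarith)
                  calc t ^ (α*q) * (1 + Real.log t) ^ (-(b*q))
                      ≤ t ^ (α*q) * 1 :=
                        mul_le_mul_of_nonneg_left h2 (Real.rpow_nonneg ht0 _)
                    _ = t ^ (α*q) := mul_one _
                    _ ≤ (n:ℝ) ^ (α*q) := h1
                · exact inv_le_one_of_one_le₀ (le_of_lt ht)
              _ = ENNReal.ofReal ((n:ℝ) ^ (α*q)) := mul_one _
        exact mul_le_mul' hw (ENNReal.rpow_le_rpow (hTnbd t) (le_of_lt hr0))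
      · rw [hTnzero t (not_lt.1 htn), ENNReal.zero_rpow_of_pos hr0, mul_zero]
        exact zero_le
    have hle : Ln n ≤ (ENNReal.ofReal ((n:ℝ) ^ (α*q)) * Kn ^ r) *
        volume (Set.Ioo (1:ℝ) (n:ℝ)) := by
      calc Ln n ≤ ∫⁻ t in Set.Ioi (1:ℝ), (Set.Ioo (1:ℝ) (n:ℝ)).indicator
            (fun _ => ENNReal.ofReal ((n:ℝ) ^ (α*q)) * Kn ^ r) t :=
            setLIntegral_mono_ae (measurable_const.indicator measurableSet_Ioo).aemeasurable
              (ae_of_all _ hbound)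
        _ ≤ ∫⁻ t, (Set.Ioo (1:ℝ) (n:ℝ)).indicator
              (fun _ => ENNReal.ofReal ((n:ℝ) ^ (α*q)) * Kn ^ r) t :=
            setLIntegral_le_lintegral _ _
        _ = (ENNReal.ofReal ((n:ℝ) ^ (α*q)) * Kn ^ r) * volume (Set.Ioo (1:ℝ) (n:ℝ)) := by
            rw [lintegral_indicator measurableSet_Ioo, setLIntegral_const]
    exact ne_top_of_le_ne_top
      (ENNReal.mul_ne_top
        (ENNReal.mul_ne_top ENNReal.ofReal_ne_top
          (ENNReal.rpow_ne_top_of_nonneg (le_of_lt hr0) hKnfin))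
        (by rw [Real.volume_Ioo]; exact ENNReal.ofReal_ne_top)) hle
  -- step 3 (Fubini)
  have hI : (∫⁻ u in Set.Ioi (1:ℝ), g u * ENNReal.ofReal ((1 + Real.log u) ^ (-(b*p))))
      = ENNReal.ofReal (b*p) *
        ∫⁻ t in Set.Ioi (1:ℝ), ENNReal.ofReal ((1 + Real.log t) ^ (-(b*p+1)) * t⁻¹) * H t := by
    have hlog1 : ∀ u : ℝ, 1 < u → ENNReal.ofReal ((1 + Real.log u) ^ (-(b*p)))
        = ENNReal.ofReal (b*p) *
          ∫⁻ t in Set.Ioi u, ENNReal.ofReal ((1 + Real.log t) ^ (-(b*p+1)) * t⁻¹) := by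
      intro u hu
      rw [log_tail hbp (le_of_lt hu), ← ENNReal.ofReal_mul (le_of_lt hbp)]
      congr 1
      field_simp
    calc (∫⁻ u in Set.Ioi (1:ℝ), g u * ENNReal.ofReal ((1 + Real.log u) ^ (-(b*p))))
        = ∫⁻ u in Set.Ioi (1:ℝ), ENNReal.ofReal (b*p) *
            (g u * ∫⁻ t in Set.Ioi u,
              ENNReal.ofReal ((1 + Real.log t) ^ (-(b*p+1)) * t⁻¹)) := by
          refine setLIntegral_congr_fun measurableSet_Ioi fun u hu => ?_
          rw [hlog1 u hu]; ring
      _ = ENNReal.ofReal (b*p) * ∫⁻ u in Set.Ioi (1:ℝ),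
            g u * ∫⁻ t in Set.Ioi u,
              ENNReal.ofReal ((1 + Real.log t) ^ (-(b*p+1)) * t⁻¹) := by
          have hanti : Antitone fun u : ℝ => ∫⁻ t in Set.Ioi u,
              ENNReal.ofReal ((1 + Real.log t) ^ (-(b*p+1)) * t⁻¹) :=
            fun s t hst => lintegral_mono_set (Set.Ioi_subset_Ioi hst)
          exact lintegral_const_mul _ (hgmeas.mul hanti.measurable)
      _ = ENNReal.ofReal (b*p) *
            ∫⁻ t in Set.Ioi (1:ℝ), ENNReal.ofReal ((1 + Real.log t) ^ (-(b*p+1)) * t⁻¹) * H t := by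
          rw [fubini_aux hgmeas (mk (-(b*p+1)))]
  -- main estimate for each n
  have hmain : ∀ n, Ln n ≤ c₄ ^ r * R := by
    intro n
    have h1 : Ln n ^ (1/r) ≤
        ∫⁻ u in Set.Ioi (1:ℝ), Gn n u * (∫⁻ t in Set.Ioo (1:ℝ) u, w t) ^ (1/r) :=
      mink hwmeas (hGnmeas n) hr1 (hLnfin n)
    have h2 : ∀ u ∈ Set.Ioi (1:ℝ), Gn n u * (∫⁻ t in Set.Ioo (1:ℝ) u, w t) ^ (1/r)
        ≤ ENNReal.ofReal (K ^ (1/r)) *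
          (g u * ENNReal.ofReal ((1 + Real.log u) ^ (-(b*p)))) := by
      intro u hu
      have hu1 : (1:ℝ) < u := hu
      have hu0 : (0:ℝ) < u := lt_trans one_pos hu1
      have h1u : (0:ℝ) < 1 + Real.log u := by
        have := Real.log_nonneg (le_of_lt hu1); linarith
      have hΦ : (∫⁻ t in Set.Ioo (1:ℝ) u, w t)
          ≤ ENNReal.ofReal (K * (u ^ (α*q) * (1 + Real.log u) ^ (-(b*q)))) := by
        have heq : ∀ t ∈ Set.Ioo (1:ℝ) u, w t
            = ENNReal.ofReal (t ^ (α*q) * (1 + Real.log t) ^ (-(b*q)) * t⁻¹) := by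
          intro t ht
          have ht0 : (0:ℝ) ≤ t := le_of_lt (lt_trans one_pos ht.1)
          have h1t : (0:ℝ) < 1 + Real.log t := by
            have := Real.log_nonneg (le_of_lt ht.1); linarith
          simp only [hwdef]
          rw [← ENNReal.ofReal_mul
            (mul_nonneg (Real.rpow_nonneg ht0 _) (Real.rpow_nonneg (le_of_lt h1t) _))]
        rw [setLIntegral_congr_fun measurableSet_Ioo heq]
        exact hKbd u hu1
      have hstep : (∫⁻ t in Set.Ioo (1:ℝ) u, w t) ^ (1/r)
          ≤ ENNReal.ofReal (K ^ (1/r) * (u ^ (α*p) * (1 + Real.log u) ^ (-(b*p)))) := by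
        have hnn : (0:ℝ) ≤ K * (u ^ (α*q) * (1 + Real.log u) ^ (-(b*q))) :=
          mul_nonneg (le_of_lt hK0)
            (mul_nonneg (Real.rpow_nonneg (le_of_lt hu0) _)
              (Real.rpow_nonneg (le_of_lt h1u) _))
        calc (∫⁻ t in Set.Ioo (1:ℝ) u, w t) ^ (1/r)
            ≤ ENNReal.ofReal (K * (u ^ (α*q) * (1 + Real.log u) ^ (-(b*q)))) ^ (1/r) :=
              ENNReal.rpow_le_rpow hΦ (le_of_lt hinvr)
          _ = ENNReal.ofReal ((K * (u ^ (α*q) * (1 + Real.log u) ^ (-(b*q)))) ^ (1/r)) :=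
              ENNReal.ofReal_rpow_of_nonneg hnn (le_of_lt hinvr)
          _ = ENNReal.ofReal (K ^ (1/r) * (u ^ (α*p) * (1 + Real.log u) ^ (-(b*p)))) := by
              congr 1
              rw [Real.mul_rpow (le_of_lt hK0)
                  (mul_nonneg (Real.rpow_nonneg (le_of_lt hu0) _)
                    (Real.rpow_nonneg (le_of_lt h1u) _)),
                Real.mul_rpow (Real.rpow_nonneg (le_of_lt hu0) _)
                  (Real.rpow_nonneg (le_of_lt h1u) _),
                ← Real.rpow_mul (le_of_lt hu0), ← Real.rpow_mul (le_of_lt h1u)]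
              congr 2
              · rw [mul_assoc]
                congr 1
                rw [← hrp]
                field_simp
              · rw [show -(b*q) * (1/r) = -(b * (q * (1/r))) from by ring]
                congr 2
                rw [← hrp]
                field_simp
      have hGg : G u * ENNReal.ofReal (u ^ (α*p) * (1 + Real.log u) ^ (-(b*p)))
          = g u * ENNReal.ofReal ((1 + Real.log u) ^ (-(b*p))) := by
        simp only [hGdef, hgdef]
        rw [ENNReal.ofReal_mul (Real.rpow_nonneg (le_of_lt hu0) _),
          show α*p + (d:ℝ)*p - d = ((d:ℝ)*p - d) + α*p from by ring,
          Real.rpow_add hu0, ENNReal.ofReal_mul (Real.rpow_nonneg (le_of_lt hu0) _)]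
        ring
      calc Gn n u * (∫⁻ t in Set.Ioo (1:ℝ) u, w t) ^ (1/r)
          ≤ G u * ENNReal.ofReal (K ^ (1/r) * (u ^ (α*p) * (1 + Real.log u) ^ (-(b*p)))) :=
            mul_le_mul' (hGnle n u) hstep
        _ = ENNReal.ofReal (K ^ (1/r)) *
              (G u * ENNReal.ofReal (u ^ (α*p) * (1 + Real.log u) ^ (-(b*p)))) := by
            rw [ENNReal.ofReal_mul (Real.rpow_nonneg (le_of_lt hK0) _)]
            ring
        _ = ENNReal.ofReal (K ^ (1/r)) *
              (g u * ENNReal.ofReal ((1 + Real.log u) ^ (-(b*p)))) := by rw [hGg]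
    have h4 := hstep4 H hHmeas
    rw [← hRdef] at h4
    have hchain : Ln n ^ (1/r) ≤
        ENNReal.ofReal (K ^ (1/r)) * (ENNReal.ofReal (b*p) * (c₅ * R ^ (1/r))) := by
      calc Ln n ^ (1/r)
          ≤ ∫⁻ u in Set.Ioi (1:ℝ), Gn n u * (∫⁻ t in Set.Ioo (1:ℝ) u, w t) ^ (1/r) := h1
        _ ≤ ∫⁻ u in Set.Ioi (1:ℝ), ENNReal.ofReal (K ^ (1/r)) *
              (g u * ENNReal.ofReal ((1 + Real.log u) ^ (-(b*p)))) :=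
            setLIntegral_mono_ae
              (((hgmeas.mul (mlog (-(b*p)))).const_mul _).aemeasurable)
              (ae_of_all _ h2)
        _ = ENNReal.ofReal (K ^ (1/r)) *
              ∫⁻ u in Set.Ioi (1:ℝ), g u * ENNReal.ofReal ((1 + Real.log u) ^ (-(b*p))) :=
            lintegral_const_mul _ (hgmeas.mul (mlog (-(b*p))))
        _ = ENNReal.ofReal (K ^ (1/r)) * (ENNReal.ofReal (b*p) *
              ∫⁻ t in Set.Ioi (1:ℝ),
                ENNReal.ofReal ((1 + Real.log t) ^ (-(b*p+1)) * t⁻¹) * H t) := by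
            rw [hI]
        _ ≤ ENNReal.ofReal (K ^ (1/r)) * (ENNReal.ofReal (b*p) * (c₅ * R ^ (1/r))) :=
            mul_le_mul_right (mul_le_mul_right h4 _) _
    calc Ln n = (Ln n ^ (1/r)) ^ r := by
          rw [← ENNReal.rpow_mul, one_div_mul_cancel hrne, ENNReal.rpow_one]
      _ ≤ (ENNReal.ofReal (K ^ (1/r)) * (ENNReal.ofReal (b*p) * (c₅ * R ^ (1/r)))) ^ r :=
          ENNReal.rpow_le_rpow hchain (le_of_lt hr0)
      _ = c₄ ^ r * R := by
          rw [hc₄def]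
          have hre : ENNReal.ofReal (K ^ (1/r)) * (ENNReal.ofReal (b*p) * (c₅ * R ^ (1/r)))
              = (ENNReal.ofReal (K ^ (1/r)) * (ENNReal.ofReal (b*p) * c₅)) * R ^ (1/r) := by
            ring
          rw [hre, ENNReal.mul_rpow_of_nonneg _ _ (le_of_lt hr0), ← ENNReal.rpow_mul,
            one_div_mul_cancel hrne, ENNReal.rpow_one]
  rw [hLsup]
  exact iSup_le hmain
end

section
/- Let 1 < r < ∞, 0 < p ≤ q ≤ ∞, b > 1/q. Then for any measurable f on 𝕋^d (or (0,1)), the Lorentz–Zygmund norm satisfies ‖f‖_{L_{r,q}(log L)_{−b+1/q}} ≲ ‖f‖_{L^{(R)}_{r,q,−b,p}}, i.e., (∫₀¹ (t^{1/r}(1−log t)^{−b+1/q} f*(t))^q dt/t)^{1/q} ≲ (∫₀¹ (1−log t)^{−bq}(∫_t¹ (u^{1/r} f*(u))^p du/u)^{q/p} dt/t)^{1/q}. -/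
open MeasureTheory Set
open scoped ENNReal

/-- finite-sum superadditivity of rpow on ℝ≥0∞ for exponent ≥ 1 -/
lemma aux_sum_rpow_le {ι : Type*} (s : Finset ι) (f : ι → ℝ≥0∞) {θ : ℝ} (hθ : 1 ≤ θ) :
    ∑ i ∈ s, f i ^ θ ≤ (∑ i ∈ s, f i) ^ θ := by
  have hθ0 : 0 < θ := lt_of_lt_of_le one_pos hθ
  by_cases htop : ∃ i ∈ s, f i = ⊤
  · obtain ⟨i, hi, hfi⟩ := htop
    have : (∑ j ∈ s, f j) = ⊤ := by
      refine eq_top_iff.2 ?_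
      calc (⊤:ℝ≥0∞) = f i := hfi.symm
      _ ≤ ∑ j ∈ s, f j := Finset.single_le_sum (fun j _ => zero_le) hi
    rw [this, ENNReal.top_rpow_of_pos hθ0]
    exact le_top
  push_neg at htop
  set S := ∑ i ∈ s, f i with hS
  by_cases hS0 : S = 0
  · have hz : ∀ i ∈ s, f i = 0 := by
      intro i hi
      exact le_antisymm (hS0 ▸ Finset.single_le_sum (fun j _ => zero_le) hi) zero_le
    have : ∑ i ∈ s, f i ^ θ = 0 := Finset.sum_eq_zero (fun i hi => by
      rw [hz i hi, ENNReal.zero_rpow_of_pos hθ0])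
    simp [this]
  have hStop : S ≠ ⊤ := by
    rw [hS]
    exact (ENNReal.sum_lt_top.2 (fun i hi => lt_top_iff_ne_top.2 (htop i hi))).ne
  have key : ∀ i ∈ s, f i ^ θ ≤ S ^ (θ - 1) * f i := by
    intro i hi
    by_cases h0 : f i = 0
    · rw [h0, ENNReal.zero_rpow_of_pos hθ0, mul_zero]
    · have h := ENNReal.rpow_add (θ - 1) 1 h0 (htop i hi)
      rw [ENNReal.rpow_one] at h
      have he : f i ^ θ = f i ^ (θ - 1) * f i := by rw [← h]; norm_num
      rw [he]
      exact mul_le_mul_left (ENNReal.rpow_le_rpow (Finset.single_le_sum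
        (fun j _ => zero_le) hi) (by linarith)) _
  calc ∑ i ∈ s, f i ^ θ ≤ ∑ i ∈ s, S ^ (θ - 1) * f i := Finset.sum_le_sum key
    _ = S ^ (θ - 1) * S := by rw [← Finset.mul_sum]
    _ = S ^ θ := by
        have h := ENNReal.rpow_add (θ - 1) 1 hS0 hStop
        rw [ENNReal.rpow_one] at h
        rw [← h]; norm_num

/-- telescoping sum of lintegrals over adjacent Ioc blocks -/
lemma aux_tele (f : ℝ → ℝ≥0∞) (c : ℕ → ℝ) (hc : ∀ n, c (n + 1) ≤ c n) (N : ℕ) :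
    ∑ k ∈ Finset.range N, ∫⁻ x in Ioc (c (k + 1)) (c k), f x
      = ∫⁻ x in Ioc (c N) (c 0), f x := by
  have hmono : Antitone c := antitone_nat_of_succ_le hc
  induction N with
  | zero => simp
  | succ N ih =>
    rw [Finset.sum_range_succ, ih]
    have h1 : c (N + 1) ≤ c N := hc N
    have h2 : c N ≤ c 0 := hmono (Nat.zero_le N)
    rw [add_comm, ← lintegral_union measurableSet_Ioc (Ioc_disjoint_Ioc_of_le le_rfl),
      Set.Ioc_union_Ioc_eq_Ioc h1 h2]

/-- lintegral of 1/t over (a,b) -/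
lemma aux_loglint {a b : ℝ} (h0 : 0 < a) (hab : a ≤ b) :
    ∫⁻ t in Ioo a b, ENNReal.ofReal t⁻¹ = ENNReal.ofReal (Real.log (b / a)) := by
  have hint : IntegrableOn (fun t : ℝ => t⁻¹) (Icc a b) := by
    apply ContinuousOn.integrableOn_Icc
    intro x hx
    exact (continuousAt_inv₀ (ne_of_gt (lt_of_lt_of_le h0 hx.1))).continuousWithinAt
  have hint' : IntegrableOn (fun t : ℝ => t⁻¹) (Ioo a b) :=
    hint.mono_set Ioo_subset_Icc_self
  have hnn : 0 ≤ᵐ[volume.restrict (Ioo a b)] fun t : ℝ => t⁻¹ := by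
    filter_upwards [ae_restrict_mem measurableSet_Ioo] with t ht
    exact inv_nonneg.2 (le_of_lt (h0.trans ht.1))
  rw [← ofReal_integral_eq_lintegral_ofReal hint' hnn]
  congr 1
  rw [← integral_Ioc_eq_integral_Ioo, ← intervalIntegral.integral_of_le hab]
  exact integral_inv (by
    intro h
    rcases h with h
    exact absurd (Set.mem_uIcc.1 h) (by push_neg; constructor <;> intro h1 <;> nlinarith))

lemma aux_blocks (r p q : ℝ) (hr : 1 < r) (hp : 0 < p) (hpq : p ≤ q)
    (φ : ℝ → ℝ≥0∞) (hφ : AntitoneOn φ (Set.Ioo 0 1))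
    {t : ℝ} (ht : 0 < t) (ht4 : t < 1/4) :
    ∫⁻ v in Ioo (4*t) 1, (ENNReal.ofReal (v ^ (1/r)) * φ v) ^ q * ENNReal.ofReal v⁻¹
      ≤ (ENNReal.ofReal (4 ^ (1/r))) ^ q * (ENNReal.ofReal 2) ^ (q/p) *
        (∫⁻ u in Ioo t 1, (ENNReal.ofReal (u ^ (1/r)) * φ u) ^ p * ENNReal.ofReal u⁻¹)
          ^ (q/p) := by
  have hq : 0 < q := hp.trans_le hpq
  have hrpos : 0 < 1/r := by positivity
  have hqp1 : 1 ≤ q / p := (one_le_div hp).2 hpq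
  have hqp0 : (0:ℝ) ≤ q / p := zero_le_one.trans hqp1
  set c : ℕ → ℝ := fun k => ((2:ℝ)⁻¹) ^ k with hcdef
  have hcpos : ∀ k, 0 < c k := fun k => pow_pos (by norm_num) k
  have hcsucc : ∀ k, c (k + 1) = c k / 2 := by
    intro k; simp only [hcdef, pow_succ]; ring
  have hcle : ∀ k, c (k + 1) ≤ c k := by
    intro k; rw [hcsucc k]; linarith [hcpos k]
  have hanti : Antitone c := antitone_nat_of_succ_le hcle
  have hc0 : c 0 = 1 := by simp [hcdef]
  have hc1 : c 1 = 2⁻¹ := by simp [hcdef]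
  have hhalf : ∀ k, c (k + 1) ≤ 2⁻¹ := fun k => hc1 ▸ hanti (by omega : 1 ≤ k + 1)
  -- choose N with c N < 4t and 2t ≤ c N
  obtain ⟨n₀, hn₀⟩ := exists_pow_lt_of_lt_one (x := 4*t) (y := (2:ℝ)⁻¹)
    (by linarith) (by norm_num)
  have hex : ∃ n : ℕ, c n < 4*t := ⟨n₀, hn₀⟩
  set N := Nat.find hex with hNdef
  have hNlt : c N < 4*t := Nat.find_spec hex
  have hN1 : 1 ≤ N := by
    rcases Nat.eq_zero_or_pos N with h | h
    · exfalso; rw [h, hc0] at hNlt; linarith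
    · exact h
  have hNge : 2*t ≤ c N := by
    have hpred : ¬ c (N - 1) < 4*t := Nat.find_min hex (by omega)
    push_neg at hpred
    have : c ((N - 1) + 1) = c (N - 1) / 2 := hcsucc _
    rw [(by omega : (N - 1) + 1 = N)] at this
    rw [this]; linarith
  -- notation
  set G : ℝ → ℝ≥0∞ := fun v => (ENNReal.ofReal (v ^ (1/r)) * φ v) ^ q * ENNReal.ofReal v⁻¹
    with hGdef
  set P : ℝ → ℝ≥0∞ := fun u => (ENNReal.ofReal (u ^ (1/r)) * φ u) ^ p * ENNReal.ofReal u⁻¹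
    with hPdef
  set a : ℕ → ℝ≥0∞ := fun k => ∫⁻ u in Ioc (c (k + 2)) (c (k + 1)), P u with hadef
  set D : ℝ≥0∞ := (ENNReal.ofReal (4 ^ (1/r))) ^ q * (ENNReal.ofReal 2) ^ (q/p) with hDdef
  -- step 1-2 : LHS ≤ ∑ blocks
  have step12 : ∫⁻ v in Ioo (4*t) 1, G v
      ≤ ∑ k ∈ Finset.range N, ∫⁻ v in Ioc (c (k + 1)) (c k), G v := by
    rw [aux_tele G c hcle N]
    apply lintegral_mono_set
    intro x hx
    exact ⟨hNlt.trans hx.1, hc0 ▸ hx.2.le⟩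
  -- step 3 : block bound (v-side)
  have step3 : ∀ k, ∫⁻ v in Ioc (c (k + 1)) (c k), G v
      ≤ (ENNReal.ofReal ((c k) ^ (1/r))) ^ q * (φ (c (k + 1))) ^ q := by
    intro k
    have hmem : c (k + 1) ∈ Set.Ioo (0:ℝ) 1 :=
      ⟨hcpos _, lt_of_le_of_lt (hhalf k) (by norm_num)⟩
    have hIoc : ∫⁻ v in Ioc (c (k + 1)) (c k), G v = ∫⁻ v in Ioo (c (k + 1)) (c k), G v :=
      (setLIntegral_congr (MeasureTheory.Ioo_ae_eq_Ioc (μ := volume)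
        (a := c (k+1)) (b := c k))).symm
    rw [hIoc]
    have hpt : ∀ v ∈ Ioo (c (k + 1)) (c k), G v ≤
        (ENNReal.ofReal ((c k) ^ (1/r)) * φ (c (k + 1))) ^ q
          * ENNReal.ofReal ((c (k + 1))⁻¹) := by
      intro v hv
      have hv0 : 0 < v := (hcpos _).trans hv.1
      have hvmem : v ∈ Set.Ioo (0:ℝ) 1 := ⟨hv0, hv.2.trans_le (hc0 ▸ hanti (Nat.zero_le k))⟩
      have h1 : ENNReal.ofReal (v ^ (1/r)) ≤ ENNReal.ofReal ((c k) ^ (1/r)) :=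
        ENNReal.ofReal_le_ofReal (Real.rpow_le_rpow hv0.le hv.2.le hrpos.le)
      have h2 : φ v ≤ φ (c (k + 1)) := hφ hmem hvmem hv.1.le
      have h3 : ENNReal.ofReal v⁻¹ ≤ ENNReal.ofReal ((c (k + 1))⁻¹) :=
        ENNReal.ofReal_le_ofReal (by
          apply inv_anti₀ (hcpos _) hv.1.le)
      exact mul_le_mul' (ENNReal.rpow_le_rpow (mul_le_mul' h1 h2) hq.le) h3
    calc ∫⁻ v in Ioo (c (k + 1)) (c k), G v
        ≤ ∫⁻ _ in Ioo (c (k + 1)) (c k),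
            (ENNReal.ofReal ((c k) ^ (1/r)) * φ (c (k + 1))) ^ q
              * ENNReal.ofReal ((c (k + 1))⁻¹) := setLIntegral_mono' measurableSet_Ioo hpt
      _ = (ENNReal.ofReal ((c k) ^ (1/r)) * φ (c (k + 1))) ^ q
            * ENNReal.ofReal ((c (k + 1))⁻¹) * ENNReal.ofReal (c (k + 1)) := by
          rw [setLIntegral_const, Real.volume_Ioo]
          congr 2
          rw [hcsucc k]; ring
      _ = (ENNReal.ofReal ((c k) ^ (1/r)) * φ (c (k + 1))) ^ q
            * ENNReal.ofReal ((c (k + 1))⁻¹ * c (k + 1)) := by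
          rw [mul_assoc, ENNReal.ofReal_mul (by positivity)]
      _ = (ENNReal.ofReal ((c k) ^ (1/r))) ^ q * (φ (c (k + 1))) ^ q := by
          rw [inv_mul_cancel₀ (ne_of_gt (hcpos _)), ENNReal.ofReal_one, mul_one,
            ENNReal.mul_rpow_of_nonneg _ _ hq.le]
  -- step 4 : lower bound on a k
  have step4 : ∀ k, (ENNReal.ofReal ((c (k + 2)) ^ (1/r))) ^ q * (φ (c (k + 1))) ^ q
        * (ENNReal.ofReal 2⁻¹) ^ (q/p) ≤ (a k) ^ (q/p) := by
    intro k
    have hmem : c (k + 1) ∈ Set.Ioo (0:ℝ) 1 :=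
      ⟨hcpos _, lt_of_le_of_lt (hhalf k) (by norm_num)⟩
    have hlow : (ENNReal.ofReal ((c (k + 2)) ^ (1/r)) * φ (c (k + 1))) ^ p
        * ENNReal.ofReal 2⁻¹ ≤ a k := by
      have hpt : ∀ u ∈ Ioc (c (k + 2)) (c (k + 1)),
          (ENNReal.ofReal ((c (k + 2)) ^ (1/r)) * φ (c (k + 1))) ^ p
            * ENNReal.ofReal ((c (k + 1))⁻¹) ≤ P u := by
        intro u hu
        have hu0 : 0 < u := (hcpos _).trans hu.1
        have humem : u ∈ Set.Ioo (0:ℝ) 1 :=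
          ⟨hu0, lt_of_le_of_lt (hu.2.trans (hhalf k)) (by norm_num)⟩
        have h1 : ENNReal.ofReal ((c (k + 2)) ^ (1/r)) ≤ ENNReal.ofReal (u ^ (1/r)) :=
          ENNReal.ofReal_le_ofReal (Real.rpow_le_rpow (hcpos _).le hu.1.le hrpos.le)
        have h2 : φ (c (k + 1)) ≤ φ u := hφ humem hmem hu.2
        have h3 : ENNReal.ofReal ((c (k + 1))⁻¹) ≤ ENNReal.ofReal u⁻¹ :=
          ENNReal.ofReal_le_ofReal (inv_anti₀ hu0 hu.2)
        exact mul_le_mul' (ENNReal.rpow_le_rpow (mul_le_mul' h1 h2) hp.le) h3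
      calc (ENNReal.ofReal ((c (k + 2)) ^ (1/r)) * φ (c (k + 1))) ^ p
            * ENNReal.ofReal 2⁻¹
          = (ENNReal.ofReal ((c (k + 2)) ^ (1/r)) * φ (c (k + 1))) ^ p
            * ENNReal.ofReal ((c (k + 1))⁻¹ * c (k + 2)) := by
            congr 1
            rw [hcsucc (k+1)]
            congr 1
            field_simp
            exact (div_self (hcpos _).ne').symm
        _ = (ENNReal.ofReal ((c (k + 2)) ^ (1/r)) * φ (c (k + 1))) ^ p
            * ENNReal.ofReal ((c (k + 1))⁻¹) * ENNReal.ofReal (c (k + 2)) := by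
            rw [ENNReal.ofReal_mul (by positivity), mul_assoc]
        _ = (∫⁻ _ in Ioc (c (k + 2)) (c (k + 1)),
              (ENNReal.ofReal ((c (k + 2)) ^ (1/r)) * φ (c (k + 1))) ^ p
                * ENNReal.ofReal ((c (k + 1))⁻¹)) := by
            rw [setLIntegral_const, Real.volume_Ioc]
            congr 1
            congr 1
            rw [hcsucc (k+1)]; ring
        _ ≤ a k := setLIntegral_mono' measurableSet_Ioc hpt
    calc (ENNReal.ofReal ((c (k + 2)) ^ (1/r))) ^ q * (φ (c (k + 1))) ^ q
          * (ENNReal.ofReal 2⁻¹) ^ (q/p)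
        = ((ENNReal.ofReal ((c (k + 2)) ^ (1/r)) * φ (c (k + 1))) ^ p
            * ENNReal.ofReal 2⁻¹) ^ (q/p) := by
          rw [ENNReal.mul_rpow_of_nonneg _ _ hqp0, ← ENNReal.rpow_mul,
            (by field_simp : p * (q/p) = q), ENNReal.mul_rpow_of_nonneg _ _ hq.le]
      _ ≤ (a k) ^ (q/p) := ENNReal.rpow_le_rpow hlow hqp0
  -- step 5 : v-block bound ≤ D * a k ^ (q/p)
  have step5 : ∀ k, (ENNReal.ofReal ((c k) ^ (1/r))) ^ q * (φ (c (k + 1))) ^ q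
      ≤ D * (a k) ^ (q/p) := by
    intro k
    have hck : c k = 4 * c (k + 2) := by rw [hcsucc (k+1), hcsucc k]; ring
    have hsplit : ENNReal.ofReal ((c k) ^ (1/r))
        = ENNReal.ofReal (4 ^ (1/r)) * ENNReal.ofReal ((c (k + 2)) ^ (1/r)) := by
      rw [← ENNReal.ofReal_mul (by positivity), ← Real.mul_rpow (by norm_num) (hcpos _).le,
        ← hck]
    have hone : (ENNReal.ofReal 2) ^ (q/p) * (ENNReal.ofReal 2⁻¹) ^ (q/p) = 1 := by
      rw [← ENNReal.mul_rpow_of_nonneg _ _ hqp0, ← ENNReal.ofReal_mul (by norm_num)]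
      norm_num
    calc (ENNReal.ofReal ((c k) ^ (1/r))) ^ q * (φ (c (k + 1))) ^ q
        = D * ((ENNReal.ofReal ((c (k + 2)) ^ (1/r))) ^ q * (φ (c (k + 1))) ^ q
            * (ENNReal.ofReal 2⁻¹) ^ (q/p)) := by
          rw [hsplit, ENNReal.mul_rpow_of_nonneg _ _ hq.le, hDdef]
          calc ENNReal.ofReal (4 ^ (1/r)) ^ q * ENNReal.ofReal ((c (k+2)) ^ (1/r)) ^ q
                * φ (c (k+1)) ^ q
              = ENNReal.ofReal (4 ^ (1/r)) ^ q * 1 * (ENNReal.ofReal ((c (k+2)) ^ (1/r)) ^ q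
                * φ (c (k+1)) ^ q) := by ring
            _ = _ := by rw [← hone]; ring
      _ ≤ D * (a k) ^ (q/p) := mul_le_mul_right (step4 k) D
  -- combine
  calc ∫⁻ v in Ioo (4*t) 1, G v
      ≤ ∑ k ∈ Finset.range N, ∫⁻ v in Ioc (c (k + 1)) (c k), G v := step12
    _ ≤ ∑ k ∈ Finset.range N, D * (a k) ^ (q/p) :=
        Finset.sum_le_sum (fun k _ => (step3 k).trans (step5 k))
    _ = D * ∑ k ∈ Finset.range N, (a k) ^ (q/p) := by rw [Finset.mul_sum]
    _ ≤ D * (∑ k ∈ Finset.range N, a k) ^ (q/p) :=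
        mul_le_mul_right (aux_sum_rpow_le _ _ hqp1) D
    _ ≤ D * (∫⁻ u in Ioo t 1, P u) ^ (q/p) := by
        apply mul_le_mul_right
        apply ENNReal.rpow_le_rpow _ hqp0
        have : ∑ k ∈ Finset.range N, a k = ∫⁻ u in Ioc (c (N + 1)) (c 1), P u := by
          have := aux_tele P (fun k => c (k + 1)) (fun n => hcle (n + 1)) N
          simpa using this
        rw [this]
        apply lintegral_mono_set
        intro u hu
        constructor
        · have : t ≤ c (N + 1) := by rw [hcsucc N]; linarith
          exact lt_of_le_of_lt this hu.1
        · exact lt_of_le_of_lt (hu.2.trans_eq hc1) (by norm_num)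

lemma aux_logbound (β : ℝ) (hβ : 0 < β) {v : ℝ} (hv : v ∈ Ioo (0:ℝ) 1) :
    ENNReal.ofReal ((1 - Real.log v) ^ (1 - β)) ≤ ENNReal.ofReal (9 ^ β) *
      ∫⁻ t in Ioo 0 (v/8), ENNReal.ofReal ((1 - Real.log t) ^ (-β)) * ENNReal.ofReal t⁻¹ := by
  set M : ℝ := 1 - Real.log v with hMdef
  have hM : 1 < M := by
    have := Real.log_neg hv.1 hv.2
    simp only [hMdef]; linarith
  have hM0 : 0 < M := by linarith
  set s : ℝ := v/8 with hsdef
  have hs : 0 < s := by simp only [hsdef]; linarith [hv.1]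
  have hs1 : s < 1 := by simp only [hsdef]; linarith [hv.2]
  set aa : ℝ := s * Real.exp (-M) with haadef
  have haa : 0 < aa := mul_pos hs (Real.exp_pos _)
  have haas : aa < s := by
    have : Real.exp (-M) < 1 := Real.exp_lt_one_iff.2 (by linarith)
    calc aa = s * Real.exp (-M) := rfl
    _ < s * 1 := by exact mul_lt_mul_of_pos_left this hs
    _ = s := mul_one s
  -- pointwise bound on (aa, s)
  have hpt : ∀ t ∈ Ioo aa s,
      ENNReal.ofReal ((9*M) ^ (-β)) * ENNReal.ofReal t⁻¹
        ≤ ENNReal.ofReal ((1 - Real.log t) ^ (-β)) * ENNReal.ofReal t⁻¹ := by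
    intro t htm
    have ht0 : 0 < t := haa.trans htm.1
    have hlogt : Real.log t < 0 := Real.log_neg ht0 (htm.2.trans hs1)
    have hMt0 : 0 < 1 - Real.log t := by linarith
    have hlogaa : Real.log aa = Real.log s - M := by
      rw [haadef, Real.log_mul (ne_of_gt hs) (ne_of_gt (Real.exp_pos _)), Real.log_exp]
      ring
    have hlogs : - Real.log s ≤ (M - 1) + 7 := by
      have h8 : Real.log 8 ≤ 7 := by
        have := Real.log_le_sub_one_of_pos (by norm_num : (0:ℝ) < 8)
        linarith
      have : Real.log s = Real.log v - Real.log 8 := by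
        rw [hsdef, Real.log_div (ne_of_gt hv.1) (by norm_num)]
      rw [this]
      have hlv : Real.log v = 1 - M := by simp [hMdef]
      rw [hlv]
      have h8' : 0 ≤ Real.log 8 := Real.log_nonneg (by norm_num)
      linarith
    have hMt : 1 - Real.log t ≤ 9 * M := by
      have : Real.log aa < Real.log t := Real.log_lt_log haa htm.1
      rw [hlogaa] at this
      nlinarith
    apply mul_le_mul_left
    exact ENNReal.ofReal_le_ofReal (Real.rpow_le_rpow_of_nonpos hMt0 hMt (by linarith))
  have key : ENNReal.ofReal ((9*M) ^ (-β)) * ENNReal.ofReal M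
      ≤ ∫⁻ t in Ioo 0 s, ENNReal.ofReal ((1 - Real.log t) ^ (-β)) * ENNReal.ofReal t⁻¹ := by
    calc ENNReal.ofReal ((9*M) ^ (-β)) * ENNReal.ofReal M
        = ENNReal.ofReal ((9*M) ^ (-β)) * ∫⁻ t in Ioo aa s, ENNReal.ofReal t⁻¹ := by
          rw [aux_loglint haa haas.le]
          congr 2
          rw [haadef]
          rw [show s / (s * Real.exp (-M)) = Real.exp M by
            rw [Real.exp_neg]; field_simp]
          exact (Real.log_exp M).symm
      _ = ∫⁻ t in Ioo aa s, ENNReal.ofReal ((9*M) ^ (-β)) * ENNReal.ofReal t⁻¹ :=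
          (lintegral_const_mul' _ _ ENNReal.ofReal_ne_top).symm
      _ ≤ ∫⁻ t in Ioo aa s, ENNReal.ofReal ((1 - Real.log t) ^ (-β)) * ENNReal.ofReal t⁻¹ :=
          setLIntegral_mono' measurableSet_Ioo hpt
      _ ≤ ∫⁻ t in Ioo 0 s, ENNReal.ofReal ((1 - Real.log t) ^ (-β)) * ENNReal.ofReal t⁻¹ := by
          apply lintegral_mono_set
          exact Ioo_subset_Ioo haa.le (le_refl s)
  have halg : ENNReal.ofReal (M ^ (1 - β))
      = ENNReal.ofReal (9 ^ β) * (ENNReal.ofReal ((9*M) ^ (-β)) * ENNReal.ofReal M) := by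
    rw [← ENNReal.ofReal_mul (by positivity), ← ENNReal.ofReal_mul (by positivity)]
    congr 1
    rw [Real.mul_rpow (by norm_num) hM0.le]
    have h9 : (9:ℝ) ^ β * 9 ^ (-β) = 1 := by
      rw [Real.rpow_neg (by norm_num)]
      exact mul_inv_cancel₀ (ne_of_gt (Real.rpow_pos_of_pos (by norm_num) β))
    have hMpow : M ^ (-β) * M = M ^ (1 - β) := by
      have h := Real.rpow_add hM0 (-β) 1
      rw [Real.rpow_one] at h
      rw [← h]; ring_nf
    calc M ^ (1-β) = (9 ^ β * 9 ^ (-β)) * (M ^ (-β) * M) := by rw [h9, hMpow]; ring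
      _ = 9 ^ β * (9 ^ (-β) * M ^ (-β) * M) := by ring
  rw [halg]
  exact mul_le_mul_right key _

lemma aux_expand (r q b : ℝ) (hq : 0 < q) (φv : ℝ≥0∞) {v : ℝ} (hv : v ∈ Ioo (0:ℝ) 1) :
    (ENNReal.ofReal (v ^ (1/r) * (1 - Real.log v) ^ (-b + 1/q)) * φv) ^ q
        * ENNReal.ofReal v⁻¹
      = ((ENNReal.ofReal (v ^ (1/r)) * φv) ^ q * ENNReal.ofReal v⁻¹) *
        ENNReal.ofReal ((1 - Real.log v) ^ (1 - b*q)) := by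
  have hM : 0 < 1 - Real.log v := by have := Real.log_neg hv.1 hv.2; linarith
  have hvr : (0:ℝ) ≤ v ^ (1/r) := Real.rpow_nonneg hv.1.le _
  rw [ENNReal.ofReal_mul hvr, mul_right_comm (ENNReal.ofReal (v ^ (1/r))) _ φv,
    ENNReal.mul_rpow_of_nonneg _ _ hq.le,
    ENNReal.ofReal_rpow_of_pos (Real.rpow_pos_of_pos hM _),
    ← Real.rpow_mul hM.le,
    (show (-b + 1/q) * q = 1 - b*q by field_simp; ring)]
  ring

/-- for `1 < r < ∞`, `0 < p ≤ q`, `b > 1/q` and any (non-increasing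
rearrangement `f* = φ` of a) measurable function on `(0,1)`,
`‖f‖_{L_{r,q}(log L)_{−b+1/q}} ≲ ‖f‖_{L^{(R)}_{r,q,−b,p}}`, i.e.
`(∫₀¹ (t^{1/r}(1−log t)^{−b+1/q} f*(t))^q dt/t)^{1/q}
  ≲ (∫₀¹ (1−log t)^{−bq}(∫_t¹(u^{1/r}f*(u))^p du/u)^{q/p} dt/t)^{1/q}`. -/
theorem lorentz_zygmund_dominated_by_grand (r p q b : ℝ)
    (hr : 1 < r) (hp : 0 < p) (hpq : p ≤ q) (hb : 1/q < b) :
    ∃ C : ℝ≥0∞, C ≠ ⊤ ∧ ∀ φ : ℝ → ℝ≥0∞,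
      Measurable φ → AntitoneOn φ (Set.Ioo 0 1) →
      (∫⁻ t in Set.Ioo (0:ℝ) 1,
          (ENNReal.ofReal (t ^ (1/r) * (1 - Real.log t) ^ (-b + 1/q)) * φ t) ^ q
            * ENNReal.ofReal (t⁻¹)) ^ (1/q)
      ≤ C * (∫⁻ t in Set.Ioo (0:ℝ) 1,
          ENNReal.ofReal ((1 - Real.log t) ^ (-(b*q))) *
            (∫⁻ u in Set.Ioo t 1,
              (ENNReal.ofReal (u ^ (1/r)) * φ u) ^ p * ENNReal.ofReal (u⁻¹)) ^ (q/p) *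
            ENNReal.ofReal (t⁻¹)) ^ (1/q) := by
  have hq : 0 < q := hp.trans_le hpq
  have hb0 : 0 < b := lt_trans (by positivity) hb
  have hβ0 : 0 < b * q := mul_pos hb0 hq
  have hqp0 : (0:ℝ) ≤ q / p := by positivity
  set D : ℝ≥0∞ := (ENNReal.ofReal (4 ^ (1/r))) ^ q * (ENNReal.ofReal 2) ^ (q/p) with hDdef
  have hDne : D ≠ ⊤ := ENNReal.mul_ne_top
    (ENNReal.rpow_ne_top_of_nonneg hq.le ENNReal.ofReal_ne_top)
    (ENNReal.rpow_ne_top_of_nonneg hqp0 ENNReal.ofReal_ne_top)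
  set K : ℝ≥0∞ := ENNReal.ofReal (9 ^ (b*q)) * D with hKdef
  have hKne : K ≠ ⊤ := ENNReal.mul_ne_top ENNReal.ofReal_ne_top hDne
  refine ⟨K ^ (1/q), ENNReal.rpow_ne_top_of_nonneg (by positivity) hKne, ?_⟩
  intro φ hφm hφ
  -- notation
  set G : ℝ → ℝ≥0∞ := fun v => (ENNReal.ofReal (v ^ (1/r)) * φ v) ^ q * ENNReal.ofReal v⁻¹
    with hGdef
  set P : ℝ → ℝ≥0∞ := fun u => (ENNReal.ofReal (u ^ (1/r)) * φ u) ^ p * ENNReal.ofReal u⁻¹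
    with hPdef
  set W : ℝ → ℝ≥0∞ := fun t =>
    ENNReal.ofReal ((1 - Real.log t) ^ (-(b*q))) * ENNReal.ofReal t⁻¹ with hWdef
  set Fb : ℝ → ℝ≥0∞ := fun t => ∫⁻ u in Ioo t 1, P u with hFdef
  -- measurability
  have hGm : Measurable G := by
    apply Measurable.mul
    · exact ((measurable_id.pow_const (1/r)).ennreal_ofReal.mul hφm).pow_const q
    · exact measurable_inv.ennreal_ofReal
  have hWm : Measurable W := by
    refine Measurable.mul (f := fun t => ENNReal.ofReal ((1 - Real.log t) ^ (-(b*q))))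
      (g := fun t => ENNReal.ofReal t⁻¹) ?_ ?_
    · exact ((measurable_const.sub Real.measurable_log).pow_const (-(b*q))).ennreal_ofReal
    · exact measurable_inv.ennreal_ofReal
  -- main integral inequality
  have main : (∫⁻ v in Ioo (0:ℝ) 1,
      (ENNReal.ofReal (v ^ (1/r) * (1 - Real.log v) ^ (-b + 1/q)) * φ v) ^ q
        * ENNReal.ofReal v⁻¹)
      ≤ K * ∫⁻ t in Ioo (0:ℝ) 1, ENNReal.ofReal ((1 - Real.log t) ^ (-(b*q))) *
          (Fb t) ^ (q/p) * ENNReal.ofReal t⁻¹ := by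
    set T : ℝ → ℝ≥0∞ := fun v => ∫⁻ t in Ioo 0 (v/8), W t with hTdef
    -- Step A
    have stepA : (∫⁻ v in Ioo (0:ℝ) 1,
        (ENNReal.ofReal (v ^ (1/r) * (1 - Real.log v) ^ (-b + 1/q)) * φ v) ^ q
          * ENNReal.ofReal v⁻¹)
        ≤ ENNReal.ofReal (9 ^ (b*q)) * ∫⁻ v in Ioo (0:ℝ) 1, G v * T v := by
      rw [← lintegral_const_mul' _ _ ENNReal.ofReal_ne_top]
      apply setLIntegral_mono' measurableSet_Ioo
      intro v hv
      rw [aux_expand r q b hq (φ v) hv]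
      calc (G v) * ENNReal.ofReal ((1 - Real.log v) ^ (1 - b*q))
          ≤ G v * (ENNReal.ofReal (9 ^ (b*q)) * T v) :=
            mul_le_mul_right (aux_logbound (b*q) hβ0 hv) _
        _ = ENNReal.ofReal (9 ^ (b*q)) * (G v * T v) := by ring
    -- Tonelli setup
    set S : Set (ℝ × ℝ) := {x : ℝ × ℝ | x.1 ∈ Ioo (0:ℝ) 1 ∧ x.2 ∈ Ioo (0:ℝ) (x.1/8)}
      with hSdef
    have hS : MeasurableSet S := by
      have : S = ({x : ℝ × ℝ | 0 < x.1} ∩ {x | x.1 < 1}) ∩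
          ({x : ℝ × ℝ | 0 < x.2} ∩ {x | x.2 < x.1/8}) := by
        ext x; simp only [hSdef, Set.mem_setOf_eq, Set.mem_Ioo, Set.mem_inter_iff]; try tauto
      rw [this]
      exact (((measurableSet_lt measurable_const measurable_fst).inter
        (measurableSet_lt measurable_fst measurable_const)).inter
        ((measurableSet_lt measurable_const measurable_snd).inter
        (measurableSet_lt measurable_snd (measurable_fst.div_const 8))))
    set f2 : ℝ → ℝ → ℝ≥0∞ := fun v t =>
      S.indicator (fun x : ℝ × ℝ => G x.1 * W x.2) (v, t) with hf2def
    have hf2m : Measurable (Function.uncurry f2) := by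
      have : Function.uncurry f2 = S.indicator (fun x : ℝ × ℝ => G x.1 * W x.2) := by
        funext x; rfl
      rw [this]
      exact ((hGm.comp measurable_fst).mul (hWm.comp measurable_snd)).indicator hS
    have EQ1 : ∫⁻ v in Ioo (0:ℝ) 1, G v * T v = ∫⁻ v, ∫⁻ t, f2 v t := by
      rw [← lintegral_indicator measurableSet_Ioo]
      congr 1
      funext v
      by_cases hv : v ∈ Ioo (0:ℝ) 1
      · rw [Set.indicator_of_mem hv]
        have : ∀ t, f2 v t = (Ioo (0:ℝ) (v/8)).indicator (fun t => G v * W t) t := by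
          intro t
          by_cases ht : t ∈ Ioo (0:ℝ) (v/8)
          · rw [Set.indicator_of_mem ht, hf2def]
            exact Set.indicator_of_mem (by exact ⟨hv, ht⟩) _
          · rw [Set.indicator_of_notMem ht, hf2def]
            exact Set.indicator_of_notMem (by
              simp only [hSdef, Set.mem_setOf_eq]; tauto) _
        simp_rw [this]
        rw [lintegral_indicator measurableSet_Ioo,
          lintegral_const_mul _ hWm]
      · rw [Set.indicator_of_notMem hv]
        have : ∀ t, f2 v t = 0 := by
          intro t
          rw [hf2def]
          exact Set.indicator_of_notMem (by
            simp only [hSdef, Set.mem_setOf_eq]; tauto) _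
        simp_rw [this, lintegral_zero]
    have SWAP : ∫⁻ v, ∫⁻ t, f2 v t = ∫⁻ t, ∫⁻ v, f2 v t :=
      lintegral_lintegral_swap hf2m.aemeasurable
    have EQ2 : ∀ t : ℝ, 0 < t →
        ∫⁻ v, f2 v t = (∫⁻ v in Ioo (8*t) 1, G v) * W t := by
      intro t ht
      have : ∀ v, f2 v t = (Ioo (8*t) 1).indicator (fun v => G v * W t) v := by
        intro v
        by_cases hvm : v ∈ Ioo (8*t) 1
        · rw [Set.indicator_of_mem hvm, hf2def]
          refine Set.indicator_of_mem ?_ _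
          refine ⟨⟨lt_trans (by linarith) hvm.1, hvm.2⟩, ht, by
            have := hvm.1; simp only []; linarith⟩
        · rw [Set.indicator_of_notMem hvm, hf2def]
          refine Set.indicator_of_notMem ?_ _
          simp only [hSdef, Set.mem_setOf_eq, Set.mem_Ioo]
          rintro ⟨⟨hv0, hv1⟩, ht0, htv⟩
          exact hvm ⟨by linarith, hv1⟩
      simp_rw [this]
      rw [lintegral_indicator measurableSet_Ioo,
        lintegral_mul_const' _ _ (ENNReal.mul_ne_top ENNReal.ofReal_ne_top
          ENNReal.ofReal_ne_top)]
    have EQ2' : ∀ t : ℝ, ¬ (0 < t) → ∫⁻ v, f2 v t = 0 := by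
      intro t ht
      have : ∀ v, f2 v t = 0 := by
        intro v
        rw [hf2def]
        exact Set.indicator_of_notMem (by
          simp only [hSdef, Set.mem_setOf_eq, Set.mem_Ioo]; tauto) _
      simp_rw [this, lintegral_zero]
    -- Step B : bound the swapped integral
    have stepB : ∫⁻ t, ∫⁻ v, f2 v t
        ≤ D * ∫⁻ t in Ioo (0:ℝ) 1, ENNReal.ofReal ((1 - Real.log t) ^ (-(b*q))) *
            (Fb t) ^ (q/p) * ENNReal.ofReal t⁻¹ := by
      have hpt : ∀ t : ℝ, ∫⁻ v, f2 v t ≤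
          (Ioo (0:ℝ) 1).indicator (fun t => D * (ENNReal.ofReal ((1 - Real.log t) ^ (-(b*q))) *
            (Fb t) ^ (q/p) * ENNReal.ofReal t⁻¹)) t := by
        intro t
        by_cases ht : 0 < t
        · by_cases ht8 : t < 1/8
          · rw [EQ2 t ht, Set.indicator_of_mem (by exact ⟨ht, by linarith⟩)]
            have h1 : ∫⁻ v in Ioo (8*t) 1, G v ≤ ∫⁻ v in Ioo (4*t) 1, G v :=
              lintegral_mono_set (Ioo_subset_Ioo (by linarith) (le_refl 1))
            have h2 := aux_blocks r p q hr hp hpq φ hφ ht (by linarith : t < 1/4)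
            calc (∫⁻ v in Ioo (8*t) 1, G v) * W t
                ≤ (D * (Fb t) ^ (q/p)) * W t :=
                  mul_le_mul_left (h1.trans h2) _
              _ = D * (ENNReal.ofReal ((1 - Real.log t) ^ (-(b*q))) *
                    (Fb t) ^ (q/p) * ENNReal.ofReal t⁻¹) := by rw [hWdef]; ring
          · rw [EQ2 t ht]
            have : Ioo (8*t) 1 = ∅ := Ioo_eq_empty (by push_neg at ht8; intro h; linarith)
            rw [this]
            simp
        · rw [EQ2' t ht]
          exact zero_le
      calc ∫⁻ t, ∫⁻ v, f2 v t
          ≤ ∫⁻ t, (Ioo (0:ℝ) 1).indicator (fun t => D *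
              (ENNReal.ofReal ((1 - Real.log t) ^ (-(b*q))) *
              (Fb t) ^ (q/p) * ENNReal.ofReal t⁻¹)) t := lintegral_mono hpt
        _ = ∫⁻ t in Ioo (0:ℝ) 1, D * (ENNReal.ofReal ((1 - Real.log t) ^ (-(b*q))) *
              (Fb t) ^ (q/p) * ENNReal.ofReal t⁻¹) := lintegral_indicator measurableSet_Ioo _
        _ = D * ∫⁻ t in Ioo (0:ℝ) 1, ENNReal.ofReal ((1 - Real.log t) ^ (-(b*q))) *
              (Fb t) ^ (q/p) * ENNReal.ofReal t⁻¹ := lintegral_const_mul' _ _ hDne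
    calc (∫⁻ v in Ioo (0:ℝ) 1,
        (ENNReal.ofReal (v ^ (1/r) * (1 - Real.log v) ^ (-b + 1/q)) * φ v) ^ q
          * ENNReal.ofReal v⁻¹)
        ≤ ENNReal.ofReal (9 ^ (b*q)) * ∫⁻ v in Ioo (0:ℝ) 1, G v * T v := stepA
      _ = ENNReal.ofReal (9 ^ (b*q)) * ∫⁻ t, ∫⁻ v, f2 v t := by rw [EQ1, SWAP]
      _ ≤ ENNReal.ofReal (9 ^ (b*q)) * (D * ∫⁻ t in Ioo (0:ℝ) 1,
            ENNReal.ofReal ((1 - Real.log t) ^ (-(b*q))) *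
            (Fb t) ^ (q/p) * ENNReal.ofReal t⁻¹) := mul_le_mul_right stepB _
      _ = K * ∫⁻ t in Ioo (0:ℝ) 1, ENNReal.ofReal ((1 - Real.log t) ^ (-(b*q))) *
            (Fb t) ^ (q/p) * ENNReal.ofReal t⁻¹ := by rw [hKdef, hDdef]; ring
  calc (∫⁻ v in Ioo (0:ℝ) 1,
      (ENNReal.ofReal (v ^ (1/r) * (1 - Real.log v) ^ (-b + 1/q)) * φ v) ^ q
        * ENNReal.ofReal v⁻¹) ^ (1/q)
      ≤ (K * ∫⁻ t in Ioo (0:ℝ) 1, ENNReal.ofReal ((1 - Real.log t) ^ (-(b*q))) *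
          (Fb t) ^ (q/p) * ENNReal.ofReal t⁻¹) ^ (1/q) :=
        ENNReal.rpow_le_rpow main (by positivity)
    _ = K ^ (1/q) * (∫⁻ t in Ioo (0:ℝ) 1, ENNReal.ofReal ((1 - Real.log t) ^ (-(b*q))) *
          (Fb t) ^ (q/p) * ENNReal.ofReal t⁻¹) ^ (1/q) :=
        ENNReal.mul_rpow_of_nonneg _ _ (by positivity)
end

section
/- Let 1 < r < ∞, 0 < q < p < ∞, b > 1/q. Then for any measurable f on (0,1) with non-increasing rearrangement f*, one has ‖f‖_{L_{r,p}(log L)_{−b+1/q}} ≤ ‖f‖_{L^{(R)}_{r,q,−b,p}}, i.e., (∫₀¹ t^{p/r} f*(t)^p (∫₀^t (1−log u)^{−bq} du/u)^{p/q} dt/t)^{1/p} ≤ (∫₀¹ (1−log u)^{−bq}(∫_u¹ (t^{1/r} f*(t))^p dt/t)^{q/p} du/u)^{1/q}, up to the equivalence ∫₀^t(1−log u)^{−bq}du/u ≍ (1−log t)^{−bq+1}. -/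
open MeasureTheory Set
open scoped ENNReal

private lemma iSup_min_natCast (x : ℝ≥0∞) : ⨆ n : ℕ, min x n = x := by
  refine le_antisymm (iSup_le fun n => min_le_left _ _) ?_
  rcases eq_or_ne x ⊤ with hx | hx
  · calc x = ⨆ n : ℕ, (n : ℝ≥0∞) := by rw [ENNReal.iSup_natCast, hx]
      _ ≤ ⨆ n : ℕ, min x n := iSup_mono fun n => by simp [hx]
  · refine le_iSup_of_le ⌈x.toReal⌉₊ ?_
    have hx' : x ≤ (⌈x.toReal⌉₊ : ℝ≥0∞) := by
      conv_lhs => rw [← ENNReal.ofReal_toReal hx]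
      rw [← ENNReal.ofReal_natCast]
      exact ENNReal.ofReal_le_ofReal (Nat.le_ceil _)
    simp [min_eq_left hx']

private lemma iSup_mul_iSup_mono {a b : ℕ → ℝ≥0∞} (ha : Monotone a) (hb : Monotone b) :
    (⨆ n, a n) * (⨆ n, b n) = ⨆ n, a n * b n := by
  refine le_antisymm ?_ (iSup_le fun n => mul_le_mul' (le_iSup a n) (le_iSup b n))
  rw [ENNReal.iSup_mul]
  refine iSup_le fun n => ?_
  rw [ENNReal.mul_iSup]
  refine iSup_le fun m => ?_
  exact le_iSup_of_le (max n m) (mul_le_mul' (ha (le_max_left n m)) (hb (le_max_right n m)))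

private lemma iSup_rpow_mono {c : ℕ → ℝ≥0∞} {s : ℝ} (hs : 0 < s) :
    (⨆ n, c n) ^ s = ⨆ n, c n ^ s := by
  refine le_antisymm ?_ (iSup_le fun n => ENNReal.rpow_le_rpow (le_iSup c n) hs.le)
  have h : (⨆ n, c n) ≤ (⨆ n, c n ^ s) ^ (1/s) := by
    refine iSup_le fun n => ?_
    have hcn : c n = (c n ^ s) ^ (1/s) := by
      rw [← ENNReal.rpow_mul, mul_one_div, div_self hs.ne', ENNReal.rpow_one]
    rw [hcn]
    exact ENNReal.rpow_le_rpow (le_iSup (fun n => c n ^ s) n) (by positivity)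
  calc (⨆ n, c n) ^ s ≤ ((⨆ n, c n ^ s) ^ (1/s)) ^ s := ENNReal.rpow_le_rpow h hs.le
    _ = ⨆ n, c n ^ s := by
        rw [← ENNReal.rpow_mul, one_div, inv_mul_cancel₀ hs.ne', ENNReal.rpow_one]

/-- Minkowski's integral inequality for the Hardy-type kernel on `(0,1)`. -/
private lemma mink_s15 (s : ℝ) (hs : 1 < s) (F G : ℝ → ℝ≥0∞)
    (hF : Measurable F) (hG : Measurable G) :
    (∫⁻ t in Ioo (0:ℝ) 1, F t * (∫⁻ u in Ioo (0:ℝ) t, G u) ^ s)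
      ≤ (∫⁻ u in Ioo (0:ℝ) 1, G u * (∫⁻ t in Ioo u 1, F t) ^ (1/s)) ^ s := by
  have hs0 : (0:ℝ) < s := lt_trans one_pos hs
  have hconj : s.HolderConjugate s.conjExponent := Real.HolderConjugate.conjExponent hs
  set s' : ℝ := s.conjExponent with hs'def
  have hs'0 : (0:ℝ) < s' := hconj.symm.pos
  have hsum : 1/s + 1/s' = 1 := by
    have := hconj.inv_add_inv_eq_one; rw [one_div, one_div]; exact this
  have hsub : (s - 1) * s' = s := hconj.sub_one_mul_conj
  set R := ∫⁻ u in Ioo (0:ℝ) 1, G u * (∫⁻ t in Ioo u 1, F t) ^ (1/s) with hRdef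
  set Fn : ℕ → ℝ → ℝ≥0∞ := fun n t => min (F t) n with hFndef
  set Gn : ℕ → ℝ → ℝ≥0∞ := fun n u => min (G u) n with hGndef
  set In : ℕ → ℝ → ℝ≥0∞ := fun n t => ∫⁻ u in Ioo (0:ℝ) t, Gn n u with hIndef
  set A : ℕ → ℝ≥0∞ := fun n => ∫⁻ t in Ioo (0:ℝ) 1, Fn n t * In n t ^ s with hAdef
  have hFn : ∀ n, Measurable (Fn n) := fun n => hF.min measurable_const
  have hGn : ∀ n, Measurable (Gn n) := fun n => hG.min measurable_const
  have hIn : ∀ n, Measurable (In n) := fun n =>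
    Monotone.measurable fun t t' htt' => lintegral_mono_set (Ioo_subset_Ioo le_rfl htt')
  have hJ : Measurable fun u : ℝ => ∫⁻ t in Ioo u 1, F t :=
    Antitone.measurable fun u u' huu' => lintegral_mono_set (Ioo_subset_Ioo huu' le_rfl)
  have hFnle : ∀ n t, Fn n t ≤ n := fun n t => min_le_right _ _
  have hGnle : ∀ n u, Gn n u ≤ n := fun n u => min_le_right _ _
  have hInle : ∀ n t, t ≤ 1 → In n t ≤ n := by
    intro n t ht
    calc In n t ≤ ∫⁻ _ in Ioo (0:ℝ) t, (n:ℝ≥0∞) := lintegral_mono fun u => hGnle n u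
      _ = (n:ℝ≥0∞) * volume (Ioo (0:ℝ) t) := setLIntegral_const _ _
      _ ≤ (n:ℝ≥0∞) * 1 := by
          refine mul_le_mul_right ?_ _
          rw [Real.volume_Ioo]
          exact ENNReal.ofReal_le_one.mpr (by linarith)
      _ = n := mul_one _
  have hAfin : ∀ n, A n ≠ ⊤ := by
    intro n
    have hb : A n ≤ ((n:ℝ≥0∞) * (n:ℝ≥0∞) ^ s) * volume (Ioo (0:ℝ) 1) := by
      rw [← setLIntegral_const]
      refine setLIntegral_mono measurable_const ?_
      intro t ht
      exact mul_le_mul' (hFnle n t) (ENNReal.rpow_le_rpow (hInle n t ht.2.le) hs0.le)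
    refine ne_top_of_le_ne_top ?_ hb
    exact ENNReal.mul_ne_top
      (ENNReal.mul_ne_top (ENNReal.natCast_ne_top n)
        (ENNReal.rpow_ne_top_of_nonneg hs0.le (ENNReal.natCast_ne_top n)))
      (by simp [Real.volume_Ioo])
  -- Hölder step
  have key : ∀ n, ∀ u ∈ Ioo (0:ℝ) 1,
      (∫⁻ t in Ioo u 1, Fn n t * In n t ^ (s-1))
        ≤ (∫⁻ t in Ioo u 1, F t) ^ (1/s) * A n ^ (1/s') := by
    intro n u hu
    have hhold := ENNReal.lintegral_mul_le_Lp_mul_Lq (volume.restrict (Ioo u 1)) hconj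
      (f := fun t => Fn n t ^ (1/s)) (g := fun t => Fn n t ^ (1/s') * In n t ^ (s-1))
      ((hFn n).pow_const _).aemeasurable
      (((hFn n).pow_const _).mul ((hIn n).pow_const _)).aemeasurable
    have heq1 : ∀ t : ℝ, Fn n t ^ (1/s) * (Fn n t ^ (1/s') * In n t ^ (s-1))
        = Fn n t * In n t ^ (s-1) := by
      intro t
      rw [← mul_assoc, ← ENNReal.rpow_add_of_nonneg _ _ (by positivity) (by positivity),
        hsum, ENNReal.rpow_one]
    have heq2 : ∀ t : ℝ, (Fn n t ^ (1/s)) ^ s = Fn n t := by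
      intro t
      rw [← ENNReal.rpow_mul, one_div, inv_mul_cancel₀ hs0.ne', ENNReal.rpow_one]
    have heq3 : ∀ t : ℝ, (Fn n t ^ (1/s') * In n t ^ (s-1)) ^ s' = Fn n t * In n t ^ s := by
      intro t
      rw [ENNReal.mul_rpow_of_nonneg _ _ hs'0.le, ← ENNReal.rpow_mul, ← ENNReal.rpow_mul,
        one_div, inv_mul_cancel₀ hs'0.ne', ENNReal.rpow_one, hsub]
    calc (∫⁻ t in Ioo u 1, Fn n t * In n t ^ (s-1))
        = ∫⁻ t in Ioo u 1,
            ((fun t => Fn n t ^ (1/s)) * fun t => Fn n t ^ (1/s') * In n t ^ (s-1)) t := by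
          refine lintegral_congr fun t => ?_
          simp only [Pi.mul_apply]
          exact (heq1 t).symm
      _ ≤ (∫⁻ t in Ioo u 1, (Fn n t ^ (1/s)) ^ s) ^ (1/s)
            * (∫⁻ t in Ioo u 1, (Fn n t ^ (1/s') * In n t ^ (s-1)) ^ s') ^ (1/s') := hhold
      _ = (∫⁻ t in Ioo u 1, Fn n t) ^ (1/s)
            * (∫⁻ t in Ioo u 1, Fn n t * In n t ^ s) ^ (1/s') := by
          rw [lintegral_congr heq2, lintegral_congr heq3]
      _ ≤ (∫⁻ t in Ioo u 1, F t) ^ (1/s) * A n ^ (1/s') := by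
          refine mul_le_mul' (ENNReal.rpow_le_rpow (lintegral_mono fun t => min_le_left _ _)
            (by positivity)) (ENNReal.rpow_le_rpow ?_ (by positivity))
          exact lintegral_mono_set (Ioo_subset_Ioo hu.1.le le_rfl)
  -- main chain with Tonelli swap
  have main : ∀ n, A n ≤ R * A n ^ (1/s') := by
    intro n
    set c : ℝ → ℝ≥0∞ := fun t => Fn n t * In n t ^ (s-1) with hcdef
    have hc : Measurable c := (hFn n).mul ((hIn n).pow_const _)
    have hcfin : ∀ t, t ≤ 1 → c t ≠ ⊤ := by
      intro t ht
      have h1 : (0:ℝ) ≤ s - 1 := by linarith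
      refine ne_top_of_le_ne_top ?_
        (mul_le_mul' (hFnle n t) (ENNReal.rpow_le_rpow (hInle n t ht) h1))
      exact ENNReal.mul_ne_top (ENNReal.natCast_ne_top n)
        (ENNReal.rpow_ne_top_of_nonneg h1 (ENNReal.natCast_ne_top n))
    set k : ℝ → ℝ → ℝ≥0∞ := fun t u => if u < t then Gn n u else 0 with hkdef
    have hkmeas : Measurable (Function.uncurry fun t u => c t * k t u) := by
      refine ((hc.comp measurable_fst)).mul ?_
      have : (Function.uncurry k) = (fun p : ℝ × ℝ => if p.2 < p.1 then Gn n p.2 else 0) := rfl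
      refine Measurable.ite ?_ ((hGn n).comp measurable_snd) measurable_const
      exact measurableSet_lt measurable_snd measurable_fst
    have hkt : ∀ t ∈ Ioo (0:ℝ) 1, (∫⁻ u in Ioo (0:ℝ) 1, k t u) = In n t := by
      intro t ht
      calc (∫⁻ u in Ioo (0:ℝ) 1, k t u)
          = ∫⁻ u in Ioo (0:ℝ) 1, (Ioo (0:ℝ) t).indicator (Gn n) u := by
            refine setLIntegral_congr_fun measurableSet_Ioo (fun u hu => ?_)
            simp only [hkdef, indicator, mem_Ioo]
            by_cases h : u < t <;> simp [h, hu.1]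
        _ = ∫⁻ u in Ioo (0:ℝ) t ∩ Ioo (0:ℝ) 1, Gn n u := by
            rw [lintegral_indicator measurableSet_Ioo, Measure.restrict_restrict measurableSet_Ioo]
        _ = In n t := by
            rw [inter_eq_left.mpr (Ioo_subset_Ioo le_rfl ht.2.le)]
    have hku : ∀ u ∈ Ioo (0:ℝ) 1,
        (∫⁻ t in Ioo (0:ℝ) 1, c t * k t u) = Gn n u * ∫⁻ t in Ioo u 1, c t := by
      intro u hu
      calc (∫⁻ t in Ioo (0:ℝ) 1, c t * k t u)
          = ∫⁻ t in Ioo (0:ℝ) 1, (Ioo u 1).indicator (fun t => Gn n u * c t) t := by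
            refine setLIntegral_congr_fun measurableSet_Ioo (fun t ht => ?_)
            simp only [hkdef, indicator, mem_Ioo]
            by_cases h : u < t <;> simp [h, ht.2, mul_comm]
        _ = ∫⁻ t in Ioo u 1 ∩ Ioo (0:ℝ) 1, Gn n u * c t := by
            rw [lintegral_indicator measurableSet_Ioo, Measure.restrict_restrict measurableSet_Ioo]
        _ = Gn n u * ∫⁻ t in Ioo u 1, c t := by
            rw [inter_eq_left.mpr (Ioo_subset_Ioo hu.1.le le_rfl),
              lintegral_const_mul' _ _ (ne_top_of_le_ne_top (ENNReal.natCast_ne_top n) (hGnle n u))]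
    have hswap : (∫⁻ t in Ioo (0:ℝ) 1, ∫⁻ u in Ioo (0:ℝ) 1, c t * k t u)
        = ∫⁻ u in Ioo (0:ℝ) 1, ∫⁻ t in Ioo (0:ℝ) 1, c t * k t u :=
      lintegral_lintegral_swap hkmeas.aemeasurable
    have step1 : A n = ∫⁻ t in Ioo (0:ℝ) 1, ∫⁻ u in Ioo (0:ℝ) 1, c t * k t u := by
      refine setLIntegral_congr_fun measurableSet_Ioo (fun t ht => ?_)
      rw [lintegral_const_mul' _ _ (hcfin t ht.2.le), hkt t ht, hcdef]
      have : In n t ^ s = In n t ^ (s-1) * In n t := by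
        calc In n t ^ s = In n t ^ ((s-1) + 1) := by ring_nf
          _ = In n t ^ (s-1) * In n t ^ (1:ℝ) :=
              ENNReal.rpow_add_of_nonneg _ _ (by linarith) zero_le_one
          _ = In n t ^ (s-1) * In n t := by rw [ENNReal.rpow_one]
      rw [this, ← mul_assoc]
    calc A n = ∫⁻ u in Ioo (0:ℝ) 1, ∫⁻ t in Ioo (0:ℝ) 1, c t * k t u := by rw [step1, hswap]
      _ = ∫⁻ u in Ioo (0:ℝ) 1, Gn n u * ∫⁻ t in Ioo u 1, c t :=
          setLIntegral_congr_fun measurableSet_Ioo hku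
      _ ≤ ∫⁻ u in Ioo (0:ℝ) 1, G u * ((∫⁻ t in Ioo u 1, F t) ^ (1/s) * A n ^ (1/s')) := by
          refine setLIntegral_mono (hG.mul ((hJ.pow_const _).mul_const _)) fun u hu => ?_
          exact mul_le_mul' (min_le_left _ _) (key n u hu)
      _ = R * A n ^ (1/s') := by
          rw [hRdef, ← lintegral_mul_const' _ _
            (ENNReal.rpow_ne_top_of_nonneg (by positivity) (hAfin n))]
          exact lintegral_congr fun u => by rw [mul_assoc]
  -- divide and conclude A n ≤ R ^ s
  have hAle : ∀ n, A n ≤ R ^ s := by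
    intro n
    rcases eq_or_ne (A n) 0 with h0 | h0
    · rw [h0]; exact zero_le
    have h1 : A n ^ (1/s) ≤ R := by
      have hsplit : A n = A n ^ (1/s) * A n ^ (1/s') := by
        rw [← ENNReal.rpow_add_of_nonneg _ _ (by positivity) (by positivity), hsum,
          ENNReal.rpow_one]
      have hmain := main n
      nth_rewrite 1 [hsplit] at hmain
      have hne0 : A n ^ (1/s') ≠ 0 := by
        simp [ENNReal.rpow_eq_zero_iff, h0, hAfin n]
      have hnetop : A n ^ (1/s') ≠ ⊤ :=
        ENNReal.rpow_ne_top_of_nonneg (by positivity) (hAfin n)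
      exact (ENNReal.mul_le_mul_iff_left hne0 hnetop).mp hmain
    calc A n = (A n ^ (1/s)) ^ s := by
          rw [← ENNReal.rpow_mul, one_div, inv_mul_cancel₀ hs0.ne', ENNReal.rpow_one]
      _ ≤ R ^ s := ENNReal.rpow_le_rpow h1 hs0.le
  -- monotone convergence
  have hFmono : ∀ t, Monotone fun n : ℕ => Fn n t := fun t n m hnm =>
    min_le_min le_rfl (Nat.cast_le.mpr hnm)
  have hGmono : Monotone Gn := fun n m hnm u => min_le_min le_rfl (Nat.cast_le.mpr hnm)
  have hImono : ∀ t, Monotone fun n : ℕ => In n t := fun t n m hnm =>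
    lintegral_mono fun u => hGmono hnm u
  have hIsup : ∀ t, (∫⁻ u in Ioo (0:ℝ) t, G u) = ⨆ n, In n t := by
    intro t
    calc (∫⁻ u in Ioo (0:ℝ) t, G u) = ∫⁻ u in Ioo (0:ℝ) t, ⨆ n : ℕ, Gn n u :=
        lintegral_congr fun u => (iSup_min_natCast (G u)).symm
      _ = ⨆ n, In n t := lintegral_iSup hGn hGmono
  have hpt : ∀ t, F t * (∫⁻ u in Ioo (0:ℝ) t, G u) ^ s = ⨆ n, Fn n t * In n t ^ s := by
    intro t
    have h1 : F t * (∫⁻ u in Ioo (0:ℝ) t, G u) ^ s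
        = (⨆ n, Fn n t) * ⨆ n, In n t ^ s := by
      refine congrArg₂ (· * ·) (iSup_min_natCast (F t)).symm ?_
      rw [hIsup t, iSup_rpow_mono hs0]
    rw [h1]
    exact iSup_mul_iSup_mono (hFmono t) fun n m hnm =>
      ENNReal.rpow_le_rpow (hImono t hnm) hs0.le
  calc (∫⁻ t in Ioo (0:ℝ) 1, F t * (∫⁻ u in Ioo (0:ℝ) t, G u) ^ s)
      = ∫⁻ t in Ioo (0:ℝ) 1, ⨆ n, Fn n t * In n t ^ s := lintegral_congr hpt
    _ = ⨆ n, A n := lintegral_iSup (fun n => (hFn n).mul ((hIn n).pow_const s))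
        (fun n m hnm t => mul_le_mul' (hFmono t hnm)
          (ENNReal.rpow_le_rpow (hImono t hnm) hs0.le))
    _ ≤ R ^ s := iSup_le hAle

/-- for `1 < r < ∞`, `0 < q < p < ∞`, `b > 1/q` and any (non-increasing
rearrangement `f* = φ` of a) measurable function on `(0,1)`, Minkowski's integral
inequality gives
`(∫₀¹ t^{p/r} f*(t)^p (∫₀^t (1−log u)^{−bq} du/u)^{p/q} dt/t)^{1/p}
  ≤ (∫₀¹ (1−log u)^{−bq}(∫_u¹ (t^{1/r} f*(t))^p dt/t)^{q/p} du/u)^{1/q}`. -/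
theorem lorentz_minkowski_inequality (r p q b : ℝ)
    (hr : 1 < r) (hq : 0 < q) (hqp : q < p) (hb : 1/q < b) :
    ∀ φ : ℝ → ℝ≥0∞, Measurable φ → AntitoneOn φ (Set.Ioo 0 1) →
      (∫⁻ t in Set.Ioo (0:ℝ) 1,
          ENNReal.ofReal (t ^ (p/r)) * (φ t) ^ p *
            (∫⁻ u in Set.Ioo (0:ℝ) t,
              ENNReal.ofReal ((1 - Real.log u) ^ (-(b*q))) * ENNReal.ofReal (u⁻¹)) ^ (p/q) *
            ENNReal.ofReal (t⁻¹)) ^ (1/p)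
      ≤ (∫⁻ u in Set.Ioo (0:ℝ) 1,
          ENNReal.ofReal ((1 - Real.log u) ^ (-(b*q))) *
            (∫⁻ t in Set.Ioo u 1,
              (ENNReal.ofReal (t ^ (1/r)) * φ t) ^ p * ENNReal.ofReal (t⁻¹)) ^ (q/p) *
            ENNReal.ofReal (u⁻¹)) ^ (1/q) := by
  intro φ hφ _
  have hp : (0:ℝ) < p := lt_trans hq hqp
  set F : ℝ → ℝ≥0∞ := fun t => ENNReal.ofReal t ^ (p/r) * φ t ^ p * ENNReal.ofReal (t⁻¹)
    with hFdef
  set G : ℝ → ℝ≥0∞ := fun u =>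
    ENNReal.ofReal (1 - Real.log u) ^ (-(b*q)) * ENNReal.ofReal (u⁻¹) with hGdef
  have hFmeas : Measurable F :=
    ((ENNReal.measurable_ofReal.pow_const _).mul (hφ.pow_const _)).mul
      (measurable_inv.ennreal_ofReal)
  have hGmeas : Measurable G :=
    (((measurable_const.sub Real.measurable_log).ennreal_ofReal).pow_const _).mul
      (measurable_inv.ennreal_ofReal)
  have hs : (1:ℝ) < p/q := (one_lt_div hq).mpr hqp
  have hmink := mink_s15 (p/q) hs F G hFmeas hGmeas
  have hinv : 1 / (p/q) = q/p := by field_simp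
  rw [hinv] at hmink
  -- pointwise conversion for G on (0,1)
  have hGpt : ∀ u ∈ Ioo (0:ℝ) 1,
      ENNReal.ofReal ((1 - Real.log u) ^ (-(b*q)))
        = ENNReal.ofReal (1 - Real.log u) ^ (-(b*q)) := by
    intro u hu
    have hlog : Real.log u < 0 := Real.log_neg hu.1 hu.2
    rw [ENNReal.ofReal_rpow_of_pos (show (0:ℝ) < 1 - Real.log u by linarith)]
  -- rewrite LHS base
  have hL : (∫⁻ t in Ioo (0:ℝ) 1,
      ENNReal.ofReal (t ^ (p/r)) * (φ t) ^ p *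
        (∫⁻ u in Ioo (0:ℝ) t,
          ENNReal.ofReal ((1 - Real.log u) ^ (-(b*q))) * ENNReal.ofReal (u⁻¹)) ^ (p/q) *
        ENNReal.ofReal (t⁻¹))
      = ∫⁻ t in Ioo (0:ℝ) 1, F t * (∫⁻ u in Ioo (0:ℝ) t, G u) ^ (p/q) := by
    refine setLIntegral_congr_fun measurableSet_Ioo (fun t ht => ?_)
    have hGin : (∫⁻ u in Ioo (0:ℝ) t,
        ENNReal.ofReal ((1 - Real.log u) ^ (-(b*q))) * ENNReal.ofReal (u⁻¹))
        = ∫⁻ u in Ioo (0:ℝ) t, G u :=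
      setLIntegral_congr_fun measurableSet_Ioo (fun u hu => by
        rw [hGpt u ⟨hu.1, lt_trans hu.2 ht.2⟩])
    rw [hGin, ← ENNReal.ofReal_rpow_of_pos ht.1]
    simp only [hFdef]
    ring
  -- rewrite RHS base
  have hR : (∫⁻ u in Ioo (0:ℝ) 1,
      ENNReal.ofReal ((1 - Real.log u) ^ (-(b*q))) *
        (∫⁻ t in Ioo u 1,
          (ENNReal.ofReal (t ^ (1/r)) * φ t) ^ p * ENNReal.ofReal (t⁻¹)) ^ (q/p) *
        ENNReal.ofReal (u⁻¹))
      = ∫⁻ u in Ioo (0:ℝ) 1, G u * (∫⁻ t in Ioo u 1, F t) ^ (q/p) := by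
    refine setLIntegral_congr_fun measurableSet_Ioo (fun u hu => ?_)
    have hinner : (∫⁻ t in Ioo u 1,
        (ENNReal.ofReal (t ^ (1/r)) * φ t) ^ p * ENNReal.ofReal (t⁻¹))
        = ∫⁻ t in Ioo u 1, F t := by
      refine setLIntegral_congr_fun measurableSet_Ioo (fun t ht => ?_)
      have ht0 : (0:ℝ) < t := lt_trans hu.1 ht.1
      rw [← ENNReal.ofReal_rpow_of_pos ht0, ENNReal.mul_rpow_of_nonneg _ _ hp.le,
        ← ENNReal.rpow_mul, show 1/r * p = p/r by field_simp]
    rw [hinner, hGpt u hu]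
    simp only [hGdef]
    ring
  rw [hL, hR]
  calc (∫⁻ t in Ioo (0:ℝ) 1, F t * (∫⁻ u in Ioo (0:ℝ) t, G u) ^ (p/q)) ^ (1/p)
      ≤ ((∫⁻ u in Ioo (0:ℝ) 1, G u * (∫⁻ t in Ioo u 1, F t) ^ (q/p)) ^ (p/q)) ^ (1/p) :=
        ENNReal.rpow_le_rpow hmink (by positivity)
    _ = (∫⁻ u in Ioo (0:ℝ) 1, G u * (∫⁻ t in Ioo u 1, F t) ^ (q/p)) ^ (1/q) := by
        rw [← ENNReal.rpow_mul]
        congr 1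
        field_simp
end
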